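/- arXiv:2212.14150 — 5 statements merged into one kernel-verified Lean document; each statement's English description precedes it below -/
import Mathlib

section
/- Consider deep matrix factorization with a preconditioned gradient step of learning rate η and scalar preconditioner a with 0 < a ≤ Λ, and suppose ‖W_l(i)‖ ≤ M for all l and ‖W(i) − W*‖ ≤ B, where ℓ(W) = (1/2)‖W − W*‖_F². Define the higher-order term E(i) = W(i+1) − W(i) + η·a·Σ_{l=1}^{L} W_{l+1:L}(i) W_{l+1:L}(i)ᵀ ∇ℓ(W(i)) W_{1:l−1}(i)ᵀ W_{1:l−1}(i), i.e. the difference between the updated product matrix and its first-order (in η) expansion. If η ≤ 1/(2LΛM^{L−2}B), then ‖E(i)‖_F ≤ 2η²L²Λ²M^{3L−4}B·‖∇ℓ(W(i))‖_F. -/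
open scoped BigOperators
open Matrix

/-- Frobenius norm of a real matrix. -/
noncomputable def frobNorm {m n : Type*} [Fintype m] [Fintype n] (A : Matrix m n ℝ) : ℝ :=
  Real.sqrt (∑ i, ∑ j, (A i j) ^ 2)

/-- Spectral norm (largest singular value) of a real matrix. -/
noncomputable def specNorm {m n : Type*} [Fintype m] [Fintype n] (A : Matrix m n ℝ) : ℝ :=
  sSup {c | ∃ x : n → ℝ, (∑ j, x j ^ 2) = 1 ∧ c = Real.sqrt (∑ i, (A.mulVec x i) ^ 2)}


noncomputable def vnorm {n : Type*} [Fintype n] (x : n → ℝ) : ℝ :=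
  Real.sqrt (∑ j, x j ^ 2)

section lemmas
variable {m n p : Type*} [Fintype m] [Fintype n] [Fintype p]

lemma vnorm_nonneg (x : n → ℝ) : 0 ≤ vnorm x := Real.sqrt_nonneg _

lemma vnorm_sq (x : n → ℝ) : vnorm x ^ 2 = ∑ j, x j ^ 2 :=
  Real.sq_sqrt (Finset.sum_nonneg fun _ _ => sq_nonneg _)

lemma frobNorm_nonneg (A : Matrix m n ℝ) : 0 ≤ frobNorm A := Real.sqrt_nonneg _

lemma specNorm_nonneg (A : Matrix m n ℝ) : 0 ≤ specNorm A := by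
  apply Real.sSup_nonneg
  rintro x ⟨y, -, rfl⟩
  exact Real.sqrt_nonneg _

lemma vnorm_smul (c : ℝ) (x : n → ℝ) : vnorm (c • x) = |c| * vnorm x := by
  unfold vnorm
  rw [← Real.sqrt_sq_eq_abs, ← Real.sqrt_mul (sq_nonneg c), Finset.mul_sum]
  congr 1
  exact Finset.sum_congr rfl fun j _ => by simp [Pi.smul_apply, mul_pow, smul_eq_mul]

-- Cauchy-Schwarz based crude bound
lemma vnorm_mulVec_le_frob (A : Matrix m n ℝ) (x : n → ℝ) :
    vnorm (A.mulVec x) ≤ frobNorm A * vnorm x := by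
  unfold vnorm frobNorm
  rw [← Real.sqrt_mul (by positivity : (0:ℝ) ≤ ∑ i, ∑ j, A i j ^ 2)]
  apply Real.sqrt_le_sqrt
  rw [Finset.sum_mul]
  apply Finset.sum_le_sum
  intro i _
  calc (A.mulVec x i) ^ 2 = (∑ j, A i j * x j) ^ 2 := by rfl
    _ ≤ (∑ j, (A i j) ^ 2) * ∑ j, x j ^ 2 := Finset.sum_mul_sq_le_sq_mul_sq _ _ _

lemma specNorm_bddAbove (A : Matrix m n ℝ) :
    BddAbove {c | ∃ x : n → ℝ, (∑ j, x j ^ 2) = 1 ∧ c = Real.sqrt (∑ i, (A.mulVec x i) ^ 2)} := by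
  refine ⟨frobNorm A, ?_⟩
  rintro c ⟨x, hx, rfl⟩
  have := vnorm_mulVec_le_frob A x
  unfold vnorm at this
  rw [hx, Real.sqrt_one, mul_one] at this
  exact this

lemma vnorm_mulVec_le (A : Matrix m n ℝ) (x : n → ℝ) :
    vnorm (A.mulVec x) ≤ specNorm A * vnorm x := by
  rcases eq_or_ne (vnorm x) 0 with h0 | h0
  · have hx : x = 0 := by
      funext j
      have hs : ∑ j, x j ^ 2 = 0 := by
        have := vnorm_sq x; rw [h0] at this; simpa using this.symm
      have := (Finset.sum_eq_zero_iff_of_nonneg (fun j _ => sq_nonneg (x j))).1 hs j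
        (Finset.mem_univ j)
      exact pow_eq_zero_iff (by norm_num) |>.1 this
    subst hx
    simp [Matrix.mulVec_zero, h0]
    unfold vnorm; simp
  · have hpos : 0 < vnorm x := lt_of_le_of_ne (vnorm_nonneg x) (Ne.symm h0)
    set u : n → ℝ := (vnorm x)⁻¹ • x with hu
    have hunorm : ∑ j, u j ^ 2 = 1 := by
      have : vnorm u = 1 := by
        rw [hu, vnorm_smul, abs_of_nonneg (inv_nonneg.2 hpos.le), inv_mul_cancel₀ h0]
      have h2 := vnorm_sq u
      rw [this] at h2; simpa using h2.symm
    have hmem : vnorm (A.mulVec u) ∈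
        {c | ∃ x : n → ℝ, (∑ j, x j ^ 2) = 1 ∧ c = Real.sqrt (∑ i, (A.mulVec x i) ^ 2)} :=
      ⟨u, hunorm, rfl⟩
    have hle : vnorm (A.mulVec u) ≤ specNorm A := le_csSup (specNorm_bddAbove A) hmem
    have hAx : A.mulVec x = (vnorm x) • A.mulVec u := by
      rw [hu, Matrix.mulVec_smul, smul_smul, mul_inv_cancel₀ h0, one_smul]
    rw [hAx, vnorm_smul, abs_of_nonneg hpos.le, mul_comm]
    exact mul_le_mul_of_nonneg_right hle hpos.le |>.trans (le_of_eq (by ring))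

lemma specNorm_le_of_bound {A : Matrix m n ℝ} {C : ℝ} (hC : 0 ≤ C)
    (h : ∀ x : n → ℝ, vnorm (A.mulVec x) ≤ C * vnorm x) : specNorm A ≤ C := by
  apply Real.sSup_le _ hC
  rintro c ⟨x, hx, rfl⟩
  have h1 : vnorm x = 1 := by unfold vnorm; rw [hx, Real.sqrt_one]
  have := h x
  rw [h1, mul_one] at this
  exact this

lemma specNorm_mul_le (A : Matrix m n ℝ) (B : Matrix n p ℝ) :
    specNorm (A * B) ≤ specNorm A * specNorm B := by
  apply specNorm_le_of_bound (mul_nonneg (specNorm_nonneg A) (specNorm_nonneg B))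
  intro x
  rw [← Matrix.mulVec_mulVec]
  calc vnorm (A.mulVec (B.mulVec x)) ≤ specNorm A * vnorm (B.mulVec x) := vnorm_mulVec_le _ _
    _ ≤ specNorm A * (specNorm B * vnorm x) :=
        mul_le_mul_of_nonneg_left (vnorm_mulVec_le _ _) (specNorm_nonneg A)
    _ = specNorm A * specNorm B * vnorm x := by ring

lemma vnorm_transpose_mulVec_le (A : Matrix m n ℝ) (x : m → ℝ) :
    vnorm (Aᵀ.mulVec x) ≤ specNorm A * vnorm x := by
  set y := Aᵀ.mulVec x with hy
  rcases eq_or_ne (vnorm y) 0 with h0 | h0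
  · rw [h0]; exact mul_nonneg (specNorm_nonneg A) (vnorm_nonneg x)
  · have hpos : 0 < vnorm y := lt_of_le_of_ne (vnorm_nonneg y) (Ne.symm h0)
    have hdot : ∑ j, y j ^ 2 = x ⬝ᵥ (A.mulVec y) := by
      have h2 : y ⬝ᵥ y = x ⬝ᵥ (A.mulVec y) := by
        rw [Matrix.dotProduct_mulVec, ← Matrix.mulVec_transpose,
          Matrix.transpose_transpose, dotProduct_comm]
      rw [← h2]
      simp [dotProduct, sq]
    have hcs : x ⬝ᵥ (A.mulVec y) ≤ vnorm x * vnorm (A.mulVec y) :=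
      Real.sum_mul_le_sqrt_mul_sqrt _ _ _
    have key : vnorm y ^ 2 ≤ vnorm x * (specNorm A * vnorm y) := by
      rw [vnorm_sq, hdot]
      exact hcs.trans (mul_le_mul_of_nonneg_left (vnorm_mulVec_le A y) (vnorm_nonneg x))
    have : vnorm y * vnorm y ≤ (specNorm A * vnorm x) * vnorm y := by
      rw [← sq]
      exact key.trans (le_of_eq (by ring))
    exact le_of_mul_le_mul_right this hpos

lemma specNorm_transpose_le (A : Matrix m n ℝ) : specNorm Aᵀ ≤ specNorm A :=
  specNorm_le_of_bound (specNorm_nonneg A) (vnorm_transpose_mulVec_le A)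

lemma frobNorm_mul_le_spec_frob (A : Matrix m n ℝ) (B : Matrix n p ℝ) :
    frobNorm (A * B) ≤ specNorm A * frobNorm B := by
  have hs : ∀ j : p, ∑ i, ((A * B) i j) ^ 2 ≤ specNorm A ^ 2 * ∑ i, (B i j) ^ 2 := by
    intro j
    have hcol : ∀ i, (A * B) i j = A.mulVec (fun k => B k j) i := by
      intro i; simp [Matrix.mul_apply, Matrix.mulVec, dotProduct]
    have h1 : vnorm (A.mulVec (fun k => B k j)) ≤ specNorm A * vnorm (fun k => B k j) :=
      vnorm_mulVec_le A _
    have h2 := mul_le_mul h1 h1 (vnorm_nonneg _) (mul_nonneg (specNorm_nonneg A) (vnorm_nonneg _))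
    rw [← sq, ← sq, vnorm_sq, mul_pow, vnorm_sq] at h2
    calc ∑ i, ((A * B) i j) ^ 2 = ∑ i, (A.mulVec (fun k => B k j) i) ^ 2 := by
          apply Finset.sum_congr rfl; intro i _; rw [hcol]
      _ ≤ specNorm A ^ 2 * ∑ k, (B k j) ^ 2 := h2
  unfold frobNorm
  rw [← Real.sqrt_sq (specNorm_nonneg A), ← Real.sqrt_mul (sq_nonneg _)]
  apply Real.sqrt_le_sqrt
  calc ∑ i, ∑ j, ((A * B) i j) ^ 2 = ∑ j, ∑ i, ((A * B) i j) ^ 2 := Finset.sum_comm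
    _ ≤ ∑ j, specNorm A ^ 2 * ∑ i, (B i j) ^ 2 := Finset.sum_le_sum fun j _ => hs j
    _ = specNorm A ^ 2 * ∑ j, ∑ i, (B i j) ^ 2 := (Finset.mul_sum _ _ _).symm
    _ = specNorm A ^ 2 * ∑ i, ∑ j, (B i j) ^ 2 := by rw [Finset.sum_comm]

lemma frobNorm_mul_le_frob_spec (A : Matrix m n ℝ) (B : Matrix n p ℝ) :
    frobNorm (A * B) ≤ frobNorm A * specNorm B := by
  have hs : ∀ i : m, ∑ j, ((A * B) i j) ^ 2 ≤ specNorm B ^ 2 * ∑ j, (A i j) ^ 2 := by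
    intro i
    have hrow : ∀ j, (A * B) i j = Bᵀ.mulVec (fun k => A i k) j := by
      intro j
      simp [Matrix.mul_apply, Matrix.mulVec, dotProduct, Matrix.transpose_apply, mul_comm]
    have h1 : vnorm (Bᵀ.mulVec (fun k => A i k)) ≤ specNorm B * vnorm (fun k => A i k) :=
      vnorm_transpose_mulVec_le B _
    have h2 := mul_le_mul h1 h1 (vnorm_nonneg _) (mul_nonneg (specNorm_nonneg B) (vnorm_nonneg _))
    rw [← sq, ← sq, vnorm_sq, mul_pow, vnorm_sq] at h2
    calc ∑ j, ((A * B) i j) ^ 2 = ∑ j, (Bᵀ.mulVec (fun k => A i k) j) ^ 2 := by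
          apply Finset.sum_congr rfl; intro j _; rw [hrow]
      _ ≤ specNorm B ^ 2 * ∑ k, (A i k) ^ 2 := h2
  unfold frobNorm
  rw [← Real.sqrt_sq (specNorm_nonneg B), ← Real.sqrt_mul
    (by positivity : (0:ℝ) ≤ ∑ i, ∑ j, A i j ^ 2)]
  apply Real.sqrt_le_sqrt
  rw [Finset.sum_mul]
  exact Finset.sum_le_sum fun i _ => (hs i).trans (le_of_eq (mul_comm _ _))

lemma specNorm_one_le [DecidableEq n] : specNorm (1 : Matrix n n ℝ) ≤ 1 := by
  apply specNorm_le_of_bound zero_le_one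
  intro x
  rw [Matrix.one_mulVec, one_mul]


lemma vnorm_eq_norm (x : n → ℝ) : vnorm x = ‖(WithLp.equiv 2 (n → ℝ)).symm x‖ := by
  rw [EuclideanSpace.norm_eq]
  unfold vnorm
  congr 1
  exact Finset.sum_congr rfl fun j _ => by rw [Real.norm_eq_abs, sq_abs]; rfl

lemma vnorm_add_le (x y : n → ℝ) : vnorm (x + y) ≤ vnorm x + vnorm y := by
  rw [vnorm_eq_norm, vnorm_eq_norm, vnorm_eq_norm]
  exact norm_add_le _ _

lemma frobNorm_eq_vnorm (A : Matrix m n ℝ) :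
    frobNorm A = vnorm (fun p : m × n => A p.1 p.2) := by
  unfold frobNorm vnorm
  congr 1
  rw [Fintype.sum_prod_type]

lemma frobNorm_add_le (A B : Matrix m n ℝ) : frobNorm (A + B) ≤ frobNorm A + frobNorm B := by
  rw [frobNorm_eq_vnorm, frobNorm_eq_vnorm, frobNorm_eq_vnorm]
  exact vnorm_add_le _ _

lemma frobNorm_smul (c : ℝ) (A : Matrix m n ℝ) : frobNorm (c • A) = |c| * frobNorm A := by
  rw [frobNorm_eq_vnorm, frobNorm_eq_vnorm]
  have : (fun p : m × n => (c • A) p.1 p.2) = c • (fun p : m × n => A p.1 p.2) := rfl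
  rw [this, vnorm_smul]

lemma frobNorm_zero : frobNorm (0 : Matrix m n ℝ) = 0 := by
  unfold frobNorm; simp

lemma frobNorm_neg (A : Matrix m n ℝ) : frobNorm (-A) = frobNorm A := by
  unfold frobNorm; congr 1
  exact Finset.sum_congr rfl fun i _ => Finset.sum_congr rfl fun j _ => by
    simp [neg_pow]

lemma frobNorm_sum_le {ι : Type*} (s : Finset ι) (f : ι → Matrix m n ℝ) :
    frobNorm (∑ l ∈ s, f l) ≤ ∑ l ∈ s, frobNorm (f l) := by
  classical
  induction s using Finset.induction_on with
  | empty => simp [frobNorm_zero]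
  | insert x s hx ih =>
    rw [Finset.sum_insert hx, Finset.sum_insert hx]
    exact (frobNorm_add_le _ _).trans (by linarith)

lemma vnorm_neg (x : n → ℝ) : vnorm (-x) = vnorm x := by
  unfold vnorm; congr 1
  exact Finset.sum_congr rfl fun j _ => by simp [neg_pow]

lemma specNorm_smul_le (c : ℝ) (A : Matrix m n ℝ) : specNorm (c • A) ≤ |c| * specNorm A := by
  apply specNorm_le_of_bound (mul_nonneg (abs_nonneg c) (specNorm_nonneg A))
  intro x
  rw [Matrix.smul_mulVec, vnorm_smul]
  calc |c| * vnorm (A.mulVec x) ≤ |c| * (specNorm A * vnorm x) :=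
        mul_le_mul_of_nonneg_left (vnorm_mulVec_le A x) (abs_nonneg c)
    _ = |c| * specNorm A * vnorm x := by ring

lemma specNorm_neg_le (A : Matrix m n ℝ) : specNorm (-A) ≤ specNorm A := by
  apply specNorm_le_of_bound (specNorm_nonneg A)
  intro x
  rw [Matrix.neg_mulVec, vnorm_neg]
  exact vnorm_mulVec_le A x

end lemmas

set_option maxHeartbeats 1000000 in
/-- Bound on the higher-order term `E(i)` of one preconditioned gradient step in
deep matrix factorization. `W l` are the current factors, `W' l` the factors after
the step, `Q l = W_l ⋯ W_1` (so `Q L` is the full product), `P l = W_L ⋯ W_{l+1}`;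
the loss is `ℓ(W) = ½‖W − W*‖_F²` with gradient `Q L − W*`. -/
theorem stmt4 (L : ℕ) (hL : 2 ≤ L) (n : ℕ → ℕ)
    (W W' : ∀ l : ℕ, Matrix (Fin (n (l + 1))) (Fin (n l)) ℝ)
    (Wstar : Matrix (Fin (n L)) (Fin (n 0)) ℝ)
    (Q Q' : ∀ l : ℕ, Matrix (Fin (n l)) (Fin (n 0)) ℝ)
    (P : ∀ l : ℕ, Matrix (Fin (n L)) (Fin (n l)) ℝ)
    (hQ0 : Q 0 = 1) (hQs : ∀ l < L, Q (l + 1) = W l * Q l)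
    (hQ0' : Q' 0 = 1) (hQs' : ∀ l < L, Q' (l + 1) = W' l * Q' l)
    (hPL : P L = 1) (hPs : ∀ l < L, P l = P (l + 1) * W l)
    (η a Λ M B : ℝ) (hη0 : 0 < η) (ha : 0 < a) (haΛ : a ≤ Λ)
    (hupd : ∀ l < L, W' l = W l - (η * a) • ((P (l + 1))ᵀ * (Q L - Wstar) * (Q l)ᵀ))
    (hM : ∀ l < L, specNorm (W l) ≤ M)
    (hB : specNorm (Q L - Wstar) ≤ B)
    (hηs : η ≤ 1 / (2 * (L : ℝ) * Λ * M ^ (L - 2) * B)) :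
    frobNorm ((Q' L - Q L) +
        (η * a) • ∑ l ∈ Finset.range L,
          P (l + 1) * (P (l + 1))ᵀ * (Q L - Wstar) * (Q l)ᵀ * Q l)
      ≤ 2 * η ^ 2 * (L : ℝ) ^ 2 * Λ ^ 2 * M ^ (3 * L - 4) * B * frobNorm (Q L - Wstar) := by
  set G : Matrix (Fin (n L)) (Fin (n 0)) ℝ := Q L - Wstar with hG
  set g : ℝ := frobNorm G with hg
  have hg0 : 0 ≤ g := frobNorm_nonneg G
  have hΛ0 : 0 < Λ := lt_of_lt_of_le ha haΛ
  have hM0 : 0 ≤ M := (specNorm_nonneg (W 0)).trans (hM 0 (by omega))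
  have hB0 : 0 ≤ B := (specNorm_nonneg G).trans hB
  have hL0 : (0:ℝ) < (L:ℝ) := by exact_mod_cast (by omega : 0 < L)
  have hden : 0 < 2 * (L:ℝ) * Λ * M ^ (L-2) * B := by
    by_contra h
    push_neg at h
    have : 1 / (2 * (L:ℝ) * Λ * M ^ (L-2) * B) ≤ 0 := by
      rcases lt_or_eq_of_le h with h' | h'
      · exact le_of_lt (div_neg_of_pos_of_neg one_pos h')
      · rw [h', div_zero]
    linarith
  have hkey : η * (2 * (L:ℝ) * Λ * M ^ (L-2) * B) ≤ 1 := by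
    rw [← one_div_one_div (2 * (L:ℝ) * Λ * M ^ (L-2) * B)] at hηs
    calc η * (2 * (L:ℝ) * Λ * M ^ (L-2) * B) ≤
        (1 / (2 * (L:ℝ) * Λ * M ^ (L-2) * B)) * (2 * (L:ℝ) * Λ * M ^ (L-2) * B) := by
          rw [one_div_one_div] at hηs
          exact mul_le_mul_of_nonneg_right hηs hden.le
      _ = 1 := one_div_mul_cancel hden.ne'
  have hpow1 : M ^ (L-1) = M ^ (L-2) * M := by
    rw [← pow_succ]; congr 1; omega
  -- main scalar smallness
  have hsmall : η * Λ * M ^ (L-1) * B ≤ M / (2 * (L:ℝ)) := by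
    rw [le_div_iff₀ (by linarith : (0:ℝ) < 2 * (L:ℝ))]
    calc η * Λ * M ^ (L-1) * B * (2 * (L:ℝ))
        = (η * (2 * (L:ℝ) * Λ * M ^ (L-2) * B)) * M := by rw [hpow1]; ring
      _ ≤ 1 * M := mul_le_mul_of_nonneg_right hkey hM0
      _ = M := one_mul M
  -- spectral norms of partial products
  have hQb : ∀ l, l ≤ L → specNorm (Q l) ≤ M ^ l := by
    intro l
    induction l with
    | zero => intro _; rw [hQ0, pow_zero]; exact specNorm_one_le
    | succ l ih =>
      intro hl
      rw [hQs l (by omega)]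
      calc specNorm (W l * Q l) ≤ specNorm (W l) * specNorm (Q l) := specNorm_mul_le _ _
        _ ≤ M * M ^ l := mul_le_mul (hM l (by omega)) (ih (by omega)) (specNorm_nonneg _) hM0
        _ = M ^ (l+1) := by rw [pow_succ]; ring
  have hPb : ∀ k l, l + k = L → specNorm (P l) ≤ M ^ k := by
    intro k
    induction k with
    | zero => intro l hl; have : l = L := by omega
              subst this; rw [hPL, pow_zero]; exact specNorm_one_le
    | succ k ih =>
      intro l hl
      rw [hPs l (by omega)]
      calc specNorm (P (l+1) * W l) ≤ specNorm (P (l+1)) * specNorm (W l) := specNorm_mul_le _ _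
        _ ≤ M ^ k * M := mul_le_mul (ih (l+1) (by omega)) (hM l (by omega))
            (specNorm_nonneg _) (pow_nonneg hM0 k)
        _ = M ^ (k+1) := (pow_succ M k).symm
  -- bounds on the update increments
  set δ : ℝ := η * a * M ^ (L-1) * B with hδ
  set δF : ℝ := η * a * M ^ (L-1) * g with hδF
  have hδ0 : 0 ≤ δ := by positivity
  have hδF0 : 0 ≤ δF := by positivity
  have hWdiff : ∀ l, l < L →
      W' l - W l = -((η * a) • ((P (l + 1))ᵀ * G * (Q l)ᵀ)) := by
    intro l hl
    rw [hupd l hl]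
    exact sub_sub_cancel_left _ _
  have hexp : ∀ l, l < L → (L - (l+1)) + l = L - 1 := by intro l hl; omega
  have hΔf : ∀ l, l < L → frobNorm (W' l - W l) ≤ δF := by
    intro l hl
    have h1 : specNorm ((P (l+1))ᵀ) ≤ M ^ (L - (l+1)) :=
      (specNorm_transpose_le _).trans (hPb (L - (l+1)) (l+1) (by omega))
    have h2 : specNorm ((Q l)ᵀ) ≤ M ^ l :=
      (specNorm_transpose_le _).trans (hQb l (by omega))
    rw [hWdiff l hl, frobNorm_neg, frobNorm_smul, abs_of_pos (mul_pos hη0 ha)]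
    have hfr : frobNorm ((P (l+1))ᵀ * G * (Q l)ᵀ) ≤ M ^ (L - (l+1)) * g * M ^ l := by
      calc frobNorm ((P (l+1))ᵀ * G * (Q l)ᵀ)
          ≤ frobNorm ((P (l+1))ᵀ * G) * specNorm ((Q l)ᵀ) := frobNorm_mul_le_frob_spec _ _
        _ ≤ (M ^ (L - (l+1)) * g) * M ^ l := by
            apply mul_le_mul _ h2 (specNorm_nonneg _) (by positivity)
            calc frobNorm ((P (l+1))ᵀ * G) ≤ specNorm ((P (l+1))ᵀ) * frobNorm G :=
                  frobNorm_mul_le_spec_frob _ _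
              _ ≤ M ^ (L - (l+1)) * g := mul_le_mul_of_nonneg_right h1 hg0
    calc η * a * frobNorm ((P (l+1))ᵀ * G * (Q l)ᵀ)
        ≤ η * a * (M ^ (L - (l+1)) * g * M ^ l) :=
          mul_le_mul_of_nonneg_left hfr (by positivity)
      _ = η * a * (M ^ (L - (l+1)) * M ^ l) * g := by ring
      _ = δF := by rw [hδF, ← pow_add, hexp l hl]
  have hΔs : ∀ l, l < L → specNorm (W' l - W l) ≤ δ := by
    intro l hl
    have h1 : specNorm ((P (l+1))ᵀ) ≤ M ^ (L - (l+1)) :=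
      (specNorm_transpose_le _).trans (hPb (L - (l+1)) (l+1) (by omega))
    have h2 : specNorm ((Q l)ᵀ) ≤ M ^ l :=
      (specNorm_transpose_le _).trans (hQb l (by omega))
    rw [hWdiff l hl]
    calc specNorm (-((η * a) • ((P (l+1))ᵀ * G * (Q l)ᵀ)))
        ≤ specNorm ((η * a) • ((P (l+1))ᵀ * G * (Q l)ᵀ)) := specNorm_neg_le _
      _ ≤ |η * a| * specNorm ((P (l+1))ᵀ * G * (Q l)ᵀ) := specNorm_smul_le _ _
      _ ≤ (η * a) * (M ^ (L - (l+1)) * B * M ^ l) := by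
          rw [abs_of_pos (mul_pos hη0 ha)]
          apply mul_le_mul_of_nonneg_left _ (by positivity)
          calc specNorm ((P (l+1))ᵀ * G * (Q l)ᵀ)
              ≤ specNorm ((P (l+1))ᵀ * G) * specNorm ((Q l)ᵀ) := specNorm_mul_le _ _
            _ ≤ (M ^ (L - (l+1)) * B) * M ^ l := by
                apply mul_le_mul _ h2 (specNorm_nonneg _) (by positivity)
                calc specNorm ((P (l+1))ᵀ * G) ≤ specNorm ((P (l+1))ᵀ) * specNorm G :=
                      specNorm_mul_le _ _
                  _ ≤ M ^ (L - (l+1)) * B :=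
                      mul_le_mul h1 hB (specNorm_nonneg _) (by positivity)
      _ = η * a * (M ^ (L - (l+1)) * M ^ l) * B := by ring
      _ = δ := by rw [hδ, ← pow_add, hexp l hl]
  have hδsmall : δ ≤ M / (2 * (L:ℝ)) := by
    refine le_trans ?_ hsmall
    rw [hδ]
    have : η * a * M ^ (L-1) * B ≤ η * Λ * M ^ (L-1) * B := by
      apply mul_le_mul_of_nonneg_right _ hB0
      apply mul_le_mul_of_nonneg_right _ (pow_nonneg hM0 _)
      exact mul_le_mul_of_nonneg_left haΛ hη0.le
    exact this
  have hdec : ∀ l, l < L → Q' (l+1) - Q (l+1) =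
      W l * (Q' l - Q l) + ((W' l - W l) * Q l + (W' l - W l) * (Q' l - Q l)) := by
    intro l hl
    rw [hQs' l hl, hQs l hl]
    simp only [Matrix.sub_mul, Matrix.mul_sub]
    abel
  -- inductive bound on the error of partial products
  have hDb : ∀ l, l ≤ L → frobNorm (Q' l - Q l) ≤ 2 * (l:ℝ) * δF * M ^ (l-1) := by
    intro l
    induction l with
    | zero =>
      intro _
      rw [hQ0', hQ0, sub_self]
      simp [frobNorm_zero]
    | succ l ih =>
      intro hl1
      have hl : l < L := by omega
      have ihl := ih (by omega)
      have hf0 : 0 ≤ frobNorm (Q' l - Q l) := frobNorm_nonneg _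
      have step : frobNorm (Q' (l+1) - Q (l+1)) ≤
          M * frobNorm (Q' l - Q l) + (δF * M ^ l + δ * frobNorm (Q' l - Q l)) := by
        rw [hdec l hl]
        calc frobNorm (W l * (Q' l - Q l) +
              ((W' l - W l) * Q l + (W' l - W l) * (Q' l - Q l)))
            ≤ frobNorm (W l * (Q' l - Q l)) +
              frobNorm ((W' l - W l) * Q l + (W' l - W l) * (Q' l - Q l)) :=
              frobNorm_add_le _ _
          _ ≤ frobNorm (W l * (Q' l - Q l)) +
              (frobNorm ((W' l - W l) * Q l) + frobNorm ((W' l - W l) * (Q' l - Q l))) := by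
              linarith [frobNorm_add_le ((W' l - W l) * Q l) ((W' l - W l) * (Q' l - Q l))]
          _ ≤ M * frobNorm (Q' l - Q l) + (δF * M ^ l + δ * frobNorm (Q' l - Q l)) := by
              have b1 : frobNorm (W l * (Q' l - Q l)) ≤ M * frobNorm (Q' l - Q l) :=
                (frobNorm_mul_le_spec_frob _ _).trans
                  (mul_le_mul_of_nonneg_right (hM l hl) hf0)
              have b2 : frobNorm ((W' l - W l) * Q l) ≤ δF * M ^ l :=
                (frobNorm_mul_le_frob_spec _ _).trans
                  (mul_le_mul (hΔf l hl) (hQb l (by omega)) (specNorm_nonneg _) hδF0)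
              have b3 : frobNorm ((W' l - W l) * (Q' l - Q l)) ≤
                  δ * frobNorm (Q' l - Q l) :=
                (frobNorm_mul_le_spec_frob _ _).trans
                  (mul_le_mul_of_nonneg_right (hΔs l hl) hf0)
              linarith
      rcases Nat.eq_zero_or_pos l with rfl | hlpos
      · have hzero : frobNorm (Q' 0 - Q 0) = 0 := by
          rw [hQ0', hQ0, sub_self, frobNorm_zero]
        rw [hzero] at step
        simp only [pow_zero] at step
        calc frobNorm (Q' 1 - Q 1) ≤ M * 0 + (δF * 1 + δ * 0) := step
          _ = δF := by ring
          _ ≤ 2 * ((0:ℕ)+1 : ℕ) * δF * M ^ ((0+1)-1) := by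
              push_cast
              simp
              linarith
      · have e1 : M ^ (l-1) * M = M ^ l := by
          rw [← pow_succ]; congr 1; omega
        have c1 : M * frobNorm (Q' l - Q l) ≤ 2 * (l:ℝ) * δF * M ^ l := by
          calc M * frobNorm (Q' l - Q l) ≤ M * (2 * (l:ℝ) * δF * M ^ (l-1)) :=
                mul_le_mul_of_nonneg_left ihl hM0
            _ = 2 * (l:ℝ) * δF * (M ^ (l-1) * M) := by ring
            _ = 2 * (l:ℝ) * δF * M ^ l := by rw [e1]
        have hlL : (l:ℝ) ≤ (L:ℝ) := by exact_mod_cast hl.le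
        have c2 : δ * frobNorm (Q' l - Q l) ≤ δF * M ^ l := by
          calc δ * frobNorm (Q' l - Q l)
              ≤ (M / (2 * (L:ℝ))) * (2 * (l:ℝ) * δF * M ^ (l-1)) :=
                mul_le_mul hδsmall ihl hf0 (div_nonneg hM0 (by linarith))
            _ = ((l:ℝ) / (L:ℝ)) * (δF * (M ^ (l-1) * M)) := by
                field_simp
            _ = ((l:ℝ) / (L:ℝ)) * (δF * M ^ l) := by rw [e1]
            _ ≤ 1 * (δF * M ^ l) := by
                apply mul_le_mul_of_nonneg_right _ (by positivity)
                rw [div_le_one hL0]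
                exact hlL
            _ = δF * M ^ l := one_mul _
        calc frobNorm (Q' (l+1) - Q (l+1))
            ≤ M * frobNorm (Q' l - Q l) + (δF * M ^ l + δ * frobNorm (Q' l - Q l)) := step
          _ ≤ 2 * (l:ℝ) * δF * M ^ l + (δF * M ^ l + δF * M ^ l) := by linarith
          _ = 2 * ((l:ℝ)+1) * δF * M ^ l := by ring
          _ = 2 * ((l+1 : ℕ):ℝ) * δF * M ^ ((l+1)-1) := by
              push_cast
              simp
  -- telescoping identity
  have hTel : ∀ l, l ≤ L → P l * (Q' l - Q l) =
      (∑ j ∈ Finset.range l, P (j+1) * (W' j - W j) * Q j)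
      + ∑ j ∈ Finset.range l, P (j+1) * (W' j - W j) * (Q' j - Q j) := by
    intro l
    induction l with
    | zero => intro _; simp [hQ0, hQ0']
    | succ l ih =>
      intro hl1
      have hl : l < L := by omega
      rw [Finset.sum_range_succ, Finset.sum_range_succ, hdec l hl,
        Matrix.mul_add, Matrix.mul_add, ← Matrix.mul_assoc, ← Matrix.mul_assoc,
        ← Matrix.mul_assoc, ← hPs l hl, ih (by omega)]
      abel
  -- identify the LHS matrix with the second sum
  have hE : (Q' L - Q L) + (η * a) • ∑ l ∈ Finset.range L,
        P (l + 1) * (P (l + 1))ᵀ * G * (Q l)ᵀ * Q l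
      = ∑ j ∈ Finset.range L, P (j+1) * (W' j - W j) * (Q' j - Q j) := by
    have hQQ : Q' L - Q L =
        (∑ j ∈ Finset.range L, P (j+1) * (W' j - W j) * Q j)
        + ∑ j ∈ Finset.range L, P (j+1) * (W' j - W j) * (Q' j - Q j) := by
      have := hTel L le_rfl
      rwa [hPL, Matrix.one_mul] at this
    have hS1 : ∑ j ∈ Finset.range L, P (j+1) * (W' j - W j) * Q j =
        -((η * a) • ∑ l ∈ Finset.range L,
          P (l + 1) * (P (l + 1))ᵀ * G * (Q l)ᵀ * Q l) := by
      rw [Finset.smul_sum, ← Finset.sum_neg_distrib]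
      apply Finset.sum_congr rfl
      intro j hj
      have hjL : j < L := Finset.mem_range.mp hj
      rw [hWdiff j hjL]
      simp only [Matrix.mul_assoc, Matrix.mul_neg, Matrix.neg_mul, Matrix.mul_smul, Matrix.smul_mul]
    rw [hQQ, hS1]
    abel
  rw [hE]
  -- final summation bound
  calc frobNorm (∑ j ∈ Finset.range L, P (j+1) * (W' j - W j) * (Q' j - Q j))
      ≤ ∑ j ∈ Finset.range L, frobNorm (P (j+1) * (W' j - W j) * (Q' j - Q j)) :=
        frobNorm_sum_le _ _
    _ ≤ ∑ j ∈ Finset.range L, 2 * (j:ℝ) * (δ * δF) * M ^ (L-2) := by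
        apply Finset.sum_le_sum
        intro j hj
        have hjL : j < L := Finset.mem_range.mp hj
        have hD : frobNorm (Q' j - Q j) ≤ 2 * (j:ℝ) * δF * M ^ (j-1) := hDb j (by omega)
        have hP : specNorm (P (j+1)) ≤ M ^ (L - (j+1)) := hPb (L - (j+1)) (j+1) (by omega)
        have step1 : frobNorm (P (j+1) * (W' j - W j) * (Q' j - Q j))
            ≤ M ^ (L-(j+1)) * (δ * (2 * (j:ℝ) * δF * M ^ (j-1))) := by
          rw [Matrix.mul_assoc]
          calc frobNorm (P (j+1) * ((W' j - W j) * (Q' j - Q j)))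
              ≤ specNorm (P (j+1)) * frobNorm ((W' j - W j) * (Q' j - Q j)) :=
                frobNorm_mul_le_spec_frob _ _
            _ ≤ M ^ (L-(j+1)) * (δ * (2 * (j:ℝ) * δF * M ^ (j-1))) := by
                apply mul_le_mul hP _ (frobNorm_nonneg _) (by positivity)
                calc frobNorm ((W' j - W j) * (Q' j - Q j))
                    ≤ specNorm (W' j - W j) * frobNorm (Q' j - Q j) :=
                      frobNorm_mul_le_spec_frob _ _
                  _ ≤ δ * (2 * (j:ℝ) * δF * M ^ (j-1)) :=
                      mul_le_mul (hΔs j hjL) hD (frobNorm_nonneg _) hδ0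
        refine step1.trans ?_
        rcases Nat.eq_zero_or_pos j with rfl | hjpos
        · simp
        · have e2 : M ^ (L-(j+1)) * M ^ (j-1) = M ^ (L-2) := by
            rw [← pow_add]; congr 1; omega
          have e3 : M ^ (L-(j+1)) * (δ * (2 * (j:ℝ) * δF * M ^ (j-1)))
              = 2 * (j:ℝ) * (δ * δF) * M ^ (L-2) := by
            rw [← e2]; ring
          exact le_of_eq e3
    _ ≤ 2 * η ^ 2 * (L:ℝ) ^ 2 * Λ ^ 2 * M ^ (3*L-4) * B * g := by
        have hp3 : M ^ (L-1) * M ^ (L-1) * M ^ (L-2) = M ^ (3*L-4) := by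
          rw [← pow_add, ← pow_add]; congr 1; omega
        have hterm : ∀ j ∈ Finset.range L,
            2 * (j:ℝ) * (δ * δF) * M ^ (L-2) ≤ 2 * ((L:ℝ)-1) * (δ * δF) * M ^ (L-2) := by
          intro j hj
          have hjL : j < L := Finset.mem_range.mp hj
          have : (j:ℝ) ≤ (L:ℝ) - 1 := by
            have : (j:ℝ) + 1 ≤ (L:ℝ) := by exact_mod_cast hjL
            linarith
          have hnn : 0 ≤ (δ * δF) * M ^ (L-2) := by positivity
          calc 2 * (j:ℝ) * (δ * δF) * M ^ (L-2) = (2 * (j:ℝ)) * ((δ * δF) * M ^ (L-2)) := by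
                ring
            _ ≤ (2 * ((L:ℝ)-1)) * ((δ * δF) * M ^ (L-2)) := by
                apply mul_le_mul_of_nonneg_right _ hnn
                linarith
            _ = 2 * ((L:ℝ)-1) * (δ * δF) * M ^ (L-2) := by ring
        calc ∑ j ∈ Finset.range L, 2 * (j:ℝ) * (δ * δF) * M ^ (L-2)
            ≤ ∑ _j ∈ Finset.range L, 2 * ((L:ℝ)-1) * (δ * δF) * M ^ (L-2) :=
              Finset.sum_le_sum hterm
          _ = (L:ℝ) * (2 * ((L:ℝ)-1) * (δ * δF) * M ^ (L-2)) := by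
              rw [Finset.sum_const, Finset.card_range, nsmul_eq_mul]
          _ = 2 * ((L:ℝ) * ((L:ℝ)-1)) * (η^2 * a^2 * M ^ (3*L-4) * B * g) := by
              rw [hδ, hδF, ← hp3]; ring
          _ ≤ 2 * (L:ℝ)^2 * (η^2 * a^2 * M ^ (3*L-4) * B * g) := by
              apply mul_le_mul_of_nonneg_right _ (by positivity)
              nlinarith [hL0]
          _ ≤ 2 * (L:ℝ)^2 * (η^2 * Λ^2 * M ^ (3*L-4) * B * g) := by
              have ha2 : a^2 ≤ Λ^2 := by nlinarith
              have hnn2 : 0 ≤ η^2 * M ^ (3*L-4) * B * g := by positivity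
              have hmain : η^2 * a^2 * M ^ (3*L-4) * B * g ≤ η^2 * Λ^2 * M ^ (3*L-4) * B * g := by
                calc η^2 * a^2 * M ^ (3*L-4) * B * g
                    = a^2 * (η^2 * M ^ (3*L-4) * B * g) := by ring
                  _ ≤ Λ^2 * (η^2 * M ^ (3*L-4) * B * g) :=
                      mul_le_mul_of_nonneg_right ha2 hnn2
                  _ = η^2 * Λ^2 * M ^ (3*L-4) * B * g := by ring
              have hnnL : (0:ℝ) ≤ 2 * (L:ℝ)^2 := by positivity
              exact mul_le_mul_of_nonneg_left hmain hnnL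
          _ = 2 * η ^ 2 * (L:ℝ) ^ 2 * Λ ^ 2 * M ^ (3*L-4) * B * g := by ring
end

section
/- Consider deep matrix factorization with a preconditioned gradient step of learning rate η and scalar preconditioner a with 0 < a ≤ Λ, and suppose ‖W_l(i)‖ ≤ M for all l and ‖W(i) − W*‖ ≤ B, where ℓ(W) = (1/2)‖W − W*‖_F². If η ≤ 1/(2LΛM^{L−2}B), then the product matrices before and after the step satisfy ‖W(i+1) − W(i)‖_F² ≤ ( 2η²L²Λ²M^{4L−4} + 8η⁴L⁴Λ⁴M^{6L−8}B² )·‖∇ℓ(W(i))‖_F². -/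
open scoped BigOperators
open Matrix

namespace Stmt5Aux

variable {m n p : Type*} [Fintype m] [Fintype n] [Fintype p]

/-- Euclidean norm of a vector. -/
noncomputable def en {n : Type*} [Fintype n] (v : n → ℝ) : ℝ :=
  Real.sqrt (∑ j, v j ^ 2)

lemma en_nonneg (v : n → ℝ) : 0 ≤ en v := Real.sqrt_nonneg _

lemma en_sq (v : n → ℝ) : en v ^ 2 = ∑ j, v j ^ 2 :=
  Real.sq_sqrt (Finset.sum_nonneg fun _ _ => sq_nonneg _)

lemma en_zero : en (0 : n → ℝ) = 0 := by simp [en]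

lemma en_eq_zero {v : n → ℝ} (h : en v = 0) : v = 0 := by
  have hsum : ∑ j, v j ^ 2 = 0 := by
    have := en_sq v
    rw [h] at this
    simpa using this.symm
  funext j
  have := (Finset.sum_eq_zero_iff_of_nonneg (fun i _ => sq_nonneg (v i))).mp hsum j
    (Finset.mem_univ j)
  exact (pow_eq_zero_iff two_ne_zero).mp this

lemma sq_le_imp {x y : ℝ} (hy : 0 ≤ y) (h : x ^ 2 ≤ y ^ 2) : x ≤ y := by
  nlinarith [sq_nonneg (x - y), sq_nonneg (x + y)]

lemma inner_le (u v : n → ℝ) : ∑ j, u j * v j ≤ en u * en v := by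
  have h := Finset.sum_mul_sq_le_sq_mul_sq Finset.univ u v
  calc ∑ j, u j * v j ≤ |∑ j, u j * v j| := le_abs_self _
    _ = Real.sqrt ((∑ j, u j * v j) ^ 2) := (Real.sqrt_sq_eq_abs _).symm
    _ ≤ Real.sqrt ((∑ j, u j ^ 2) * ∑ j, v j ^ 2) := Real.sqrt_le_sqrt h
    _ = en u * en v := Real.sqrt_mul (Finset.sum_nonneg fun _ _ => sq_nonneg _) _

lemma en_add_le (u v : n → ℝ) : en (u + v) ≤ en u + en v := by
  have hin := inner_le u v
  have hu := en_sq u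
  have hv := en_sq v
  have hexp : ∑ j, (u + v) j ^ 2
      = (∑ j, u j ^ 2) + 2 * (∑ j, u j * v j) + ∑ j, v j ^ 2 := by
    rw [Finset.mul_sum, ← Finset.sum_add_distrib, ← Finset.sum_add_distrib]
    exact Finset.sum_congr rfl fun j _ => by simp [Pi.add_apply]; ring
  have hsq : en (u + v) ^ 2 ≤ (en u + en v) ^ 2 := by
    rw [en_sq, hexp]
    nlinarith [en_nonneg u, en_nonneg v, hin, hu, hv]
  exact sq_le_imp (add_nonneg (en_nonneg u) (en_nonneg v)) hsq

lemma en_smul (c : ℝ) (v : n → ℝ) : en (c • v) = |c| * en v := by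
  unfold en
  rw [show ∑ j, (c • v) j ^ 2 = c ^ 2 * ∑ j, v j ^ 2 by
    rw [Finset.mul_sum]
    exact Finset.sum_congr rfl fun j _ => by simp [Pi.smul_apply, smul_eq_mul]; ring]
  rw [Real.sqrt_mul (sq_nonneg c), Real.sqrt_sq_eq_abs]

lemma en_neg (v : n → ℝ) : en (-v) = en v := by
  unfold en
  congr 1
  exact Finset.sum_congr rfl fun j _ => by simp

lemma en_sub_le (u v : n → ℝ) : en (u - v) ≤ en u + en v := by
  rw [sub_eq_add_neg]
  exact (en_add_le u (-v)).trans (by rw [en_neg])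

lemma specNorm_eq (A : Matrix m n ℝ) :
    specNorm A = sSup {c | ∃ x : n → ℝ, (∑ j, x j ^ 2) = 1 ∧ c = en (A.mulVec x)} := rfl

lemma spec_bdd (A : Matrix m n ℝ) :
    BddAbove {c | ∃ x : n → ℝ, (∑ j, x j ^ 2) = 1 ∧ c = en (A.mulVec x)} := by
  refine ⟨Real.sqrt (∑ i, ∑ j, A i j ^ 2), ?_⟩
  rintro c ⟨x, hx, rfl⟩
  unfold en
  apply Real.sqrt_le_sqrt
  calc ∑ i, (A.mulVec x) i ^ 2 = ∑ i, (∑ j, A i j * x j) ^ 2 := by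
        simp [Matrix.mulVec, dotProduct]
    _ ≤ ∑ i, (∑ j, A i j ^ 2) * ∑ j, x j ^ 2 :=
        Finset.sum_le_sum fun i _ => Finset.sum_mul_sq_le_sq_mul_sq _ _ _
    _ = ∑ i, ∑ j, A i j ^ 2 := by rw [hx]; simp

lemma spec_nonneg (A : Matrix m n ℝ) : 0 ≤ specNorm A := by
  rw [specNorm_eq]
  exact Real.sSup_nonneg (by rintro c ⟨x, hx, rfl⟩; exact en_nonneg _)

lemma spec_le_of {A : Matrix m n ℝ} {K : ℝ} (hK : 0 ≤ K)
    (h : ∀ x : n → ℝ, (∑ j, x j ^ 2) = 1 → en (A.mulVec x) ≤ K) : specNorm A ≤ K := by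
  rw [specNorm_eq]
  exact Real.sSup_le (by rintro c ⟨x, hx, rfl⟩; exact h x hx) hK

lemma en_one {x : n → ℝ} (hx : ∑ j, x j ^ 2 = 1) : en x = 1 := by
  unfold en; rw [hx, Real.sqrt_one]

lemma en_mulVec_le (A : Matrix m n ℝ) (x : n → ℝ) :
    en (A.mulVec x) ≤ specNorm A * en x := by
  rcases eq_or_ne (en x) 0 with h0 | h0
  · have hx0 : x = 0 := en_eq_zero h0
    subst hx0
    simp [Matrix.mulVec_zero, en_zero]
  · have hx0 : 0 < en x := lt_of_le_of_ne (en_nonneg x) (Ne.symm h0)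
    set u := (en x)⁻¹ • x with hu_def
    have hu : ∑ j, u j ^ 2 = 1 := by
      have hx2 := en_sq x
      have : ∑ j, u j ^ 2 = (en x)⁻¹ ^ 2 * ∑ j, x j ^ 2 := by
        rw [Finset.mul_sum]
        exact Finset.sum_congr rfl fun j _ => by
          simp [hu_def, Pi.smul_apply, smul_eq_mul]; ring
      rw [this, ← hx2]
      field_simp
    have hmem : en (A.mulVec u) ≤ specNorm A := by
      rw [specNorm_eq]
      exact le_csSup (spec_bdd A) ⟨u, hu, rfl⟩
    have hx_eq : A.mulVec x = en x • A.mulVec u := by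
      rw [hu_def, Matrix.mulVec_smul, smul_smul, mul_inv_cancel₀ h0, one_smul]
    rw [hx_eq, en_smul, abs_of_pos hx0]
    calc en x * en (A.mulVec u) ≤ en x * specNorm A :=
          mul_le_mul_of_nonneg_left hmem hx0.le
      _ = specNorm A * en x := mul_comm _ _

lemma spec_mul_le (A : Matrix m n ℝ) (B : Matrix n p ℝ) :
    specNorm (A * B) ≤ specNorm A * specNorm B := by
  apply spec_le_of (mul_nonneg (spec_nonneg A) (spec_nonneg B))
  intro x hx
  rw [← Matrix.mulVec_mulVec]
  calc en (A.mulVec (B.mulVec x)) ≤ specNorm A * en (B.mulVec x) := en_mulVec_le _ _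
    _ ≤ specNorm A * (specNorm B * en x) :=
        mul_le_mul_of_nonneg_left (en_mulVec_le _ _) (spec_nonneg A)
    _ = specNorm A * specNorm B := by rw [en_one hx, mul_one]

lemma spec_transpose_le (A : Matrix m n ℝ) : specNorm Aᵀ ≤ specNorm A := by
  apply spec_le_of (spec_nonneg A)
  intro y hy
  set w := Aᵀ.mulVec y with hw
  have key : en w ^ 2 = ∑ i, y i * (A.mulVec w) i := by
    rw [en_sq]
    have hwj : ∀ j, w j = ∑ i, A i j * y i := fun j => by
      simp [hw, Matrix.mulVec, dotProduct, Matrix.transpose_apply]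
    calc ∑ j, w j ^ 2 = ∑ j, (∑ i, A i j * y i) * w j := by
          refine Finset.sum_congr rfl fun j _ => ?_
          rw [sq]
          exact congrArg (· * w j) (hwj j)
      _ = ∑ i, y i * ∑ j, A i j * w j := by
          simp_rw [Finset.sum_mul, Finset.mul_sum]
          rw [Finset.sum_comm]
          exact Finset.sum_congr rfl fun i _ => Finset.sum_congr rfl fun j _ => by ring
      _ = ∑ i, y i * (A.mulVec w) i := by
          simp [Matrix.mulVec, dotProduct]
  have cs : ∑ i, y i * (A.mulVec w) i ≤ en y * en (A.mulVec w) := inner_le _ _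
  have h2 : en w ^ 2 ≤ specNorm A * en w := by
    calc en w ^ 2 = ∑ i, y i * (A.mulVec w) i := key
      _ ≤ en y * en (A.mulVec w) := cs
      _ = en (A.mulVec w) := by rw [en_one hy, one_mul]
      _ ≤ specNorm A * en w := en_mulVec_le _ _
  rcases (en_nonneg w).eq_or_lt with h0 | h0
  · rw [← h0]; exact spec_nonneg A
  · rw [sq] at h2
    exact le_of_mul_le_mul_right h2 h0

lemma spec_one_le [DecidableEq n] : specNorm (1 : Matrix n n ℝ) ≤ 1 := by
  apply spec_le_of zero_le_one
  intro x hx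
  rw [Matrix.one_mulVec, en_one hx]

lemma spec_smul_le (c : ℝ) (A : Matrix m n ℝ) :
    specNorm (c • A) ≤ |c| * specNorm A := by
  apply spec_le_of (mul_nonneg (abs_nonneg c) (spec_nonneg A))
  intro x hx
  rw [Matrix.smul_mulVec, en_smul]
  have := en_mulVec_le A x
  rw [en_one hx, mul_one] at this
  exact mul_le_mul_of_nonneg_left this (abs_nonneg c)

lemma spec_sub_le (A B : Matrix m n ℝ) :
    specNorm (A - B) ≤ specNorm A + specNorm B := by
  apply spec_le_of (add_nonneg (spec_nonneg A) (spec_nonneg B))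
  intro x hx
  rw [Matrix.sub_mulVec]
  have hA := en_mulVec_le A x
  have hB := en_mulVec_le B x
  rw [en_one hx, mul_one] at hA hB
  calc en (A.mulVec x - B.mulVec x) ≤ en (A.mulVec x) + en (B.mulVec x) := en_sub_le _ _
    _ ≤ specNorm A + specNorm B := add_le_add hA hB

lemma frob_eq (A : Matrix m n ℝ) : frobNorm A = en (fun q : m × n => A q.1 q.2) := by
  unfold frobNorm en
  congr 1
  exact (Fintype.sum_prod_type (f := fun q : m × n => A q.1 q.2 ^ 2)).symm

lemma frob_nonneg (A : Matrix m n ℝ) : 0 ≤ frobNorm A := Real.sqrt_nonneg _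

lemma frob_sq (A : Matrix m n ℝ) : frobNorm A ^ 2 = ∑ i, ∑ j, A i j ^ 2 :=
  Real.sq_sqrt (Finset.sum_nonneg fun _ _ => Finset.sum_nonneg fun _ _ => sq_nonneg _)

lemma frob_zero : frobNorm (0 : Matrix m n ℝ) = 0 := by simp [frobNorm]

lemma frob_transpose (A : Matrix m n ℝ) : frobNorm Aᵀ = frobNorm A := by
  unfold frobNorm
  congr 1
  rw [Finset.sum_comm]
  exact Finset.sum_congr rfl fun i _ => Finset.sum_congr rfl fun j _ => by
    rw [Matrix.transpose_apply]

lemma frob_smul (c : ℝ) (A : Matrix m n ℝ) : frobNorm (c • A) = |c| * frobNorm A := by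
  rw [frob_eq, frob_eq]
  rw [show (fun q : m × n => (c • A) q.1 q.2) = c • (fun q : m × n => A q.1 q.2) from
    funext fun q => by simp]
  exact en_smul c _

lemma frob_neg (A : Matrix m n ℝ) : frobNorm (-A) = frobNorm A := by
  rw [show -A = (-1 : ℝ) • A by simp, frob_smul]
  simp

lemma frob_add_le (A B : Matrix m n ℝ) : frobNorm (A + B) ≤ frobNorm A + frobNorm B := by
  rw [frob_eq, frob_eq, frob_eq]
  rw [show (fun q : m × n => (A + B) q.1 q.2)
      = (fun q : m × n => A q.1 q.2) + (fun q : m × n => B q.1 q.2) from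
    funext fun q => by simp]
  exact en_add_le _ _

lemma frob_mul_le_left (A : Matrix m n ℝ) (B : Matrix n p ℝ) :
    frobNorm (A * B) ≤ specNorm A * frobNorm B := by
  apply sq_le_imp (mul_nonneg (spec_nonneg A) (frob_nonneg B))
  rw [mul_pow, frob_sq, frob_sq, Finset.sum_comm]
  calc ∑ j, ∑ i, (A * B) i j ^ 2
      = ∑ j, en (A.mulVec (fun k => B k j)) ^ 2 := by
        refine Finset.sum_congr rfl fun j _ => ?_
        rw [en_sq]
        exact Finset.sum_congr rfl fun i _ => by
          simp [Matrix.mul_apply, Matrix.mulVec, dotProduct]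
    _ ≤ ∑ j, (specNorm A * en (fun k => B k j)) ^ 2 := by
        refine Finset.sum_le_sum fun j _ => ?_
        exact pow_le_pow_left₀ (en_nonneg _) (en_mulVec_le _ _) 2
    _ = specNorm A ^ 2 * ∑ j, ∑ k, B k j ^ 2 := by
        rw [Finset.mul_sum]
        exact Finset.sum_congr rfl fun j _ => by rw [mul_pow, en_sq]
    _ = specNorm A ^ 2 * ∑ k, ∑ j, B k j ^ 2 := by rw [Finset.sum_comm]

lemma frob_mul_le_right (A : Matrix m n ℝ) (B : Matrix n p ℝ) :
    frobNorm (A * B) ≤ frobNorm A * specNorm B := by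
  rw [← frob_transpose (A * B), Matrix.transpose_mul]
  calc frobNorm (Bᵀ * Aᵀ) ≤ specNorm Bᵀ * frobNorm Aᵀ := frob_mul_le_left _ _
    _ ≤ specNorm B * frobNorm A := by
        rw [frob_transpose]
        exact mul_le_mul_of_nonneg_right (spec_transpose_le B) (frob_nonneg A)
    _ = frobNorm A * specNorm B := mul_comm _ _

end Stmt5Aux

open Stmt5Aux

set_option maxHeartbeats 1000000 in
/-- One preconditioned gradient step on a depth-`L` matrix factorization.
`W l` (for `l < L`) are the current factors, `W' l` the factors after the step;
`Q l = W_{l} ⋯ W_1` (so `Q L` is the full product) and `P l = W_L ⋯ W_{l+1}`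
are the partial products (empty products are identities); the loss is
`ℓ(W) = ½‖W − W*‖_F²` with gradient `Q L − W*`. -/
theorem stmt5 (L : ℕ) (hL : 2 ≤ L) (n : ℕ → ℕ)
    (W W' : ∀ l : ℕ, Matrix (Fin (n (l + 1))) (Fin (n l)) ℝ)
    (Wstar : Matrix (Fin (n L)) (Fin (n 0)) ℝ)
    (Q Q' : ∀ l : ℕ, Matrix (Fin (n l)) (Fin (n 0)) ℝ)
    (P : ∀ l : ℕ, Matrix (Fin (n L)) (Fin (n l)) ℝ)
    (hQ0 : Q 0 = 1) (hQs : ∀ l < L, Q (l + 1) = W l * Q l)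
    (hQ0' : Q' 0 = 1) (hQs' : ∀ l < L, Q' (l + 1) = W' l * Q' l)
    (hPL : P L = 1) (hPs : ∀ l < L, P l = P (l + 1) * W l)
    (η a Λ M B : ℝ) (hη0 : 0 < η) (ha : 0 < a) (haΛ : a ≤ Λ)
    (hupd : ∀ l < L, W' l = W l - (η * a) • ((P (l + 1))ᵀ * (Q L - Wstar) * (Q l)ᵀ))
    (hM : ∀ l < L, specNorm (W l) ≤ M)
    (hB : specNorm (Q L - Wstar) ≤ B)
    (hηs : η ≤ 1 / (2 * (L : ℝ) * Λ * M ^ (L - 2) * B)) :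
    frobNorm (Q' L - Q L) ^ 2
      ≤ (2 * η ^ 2 * (L : ℝ) ^ 2 * Λ ^ 2 * M ^ (4 * L - 4)
          + 8 * η ^ 4 * (L : ℝ) ^ 4 * Λ ^ 4 * M ^ (6 * L - 8) * B ^ 2)
        * frobNorm (Q L - Wstar) ^ 2 := by
  set G : Matrix (Fin (n L)) (Fin (n 0)) ℝ := Q L - Wstar with hGdef
  set g : ℝ := frobNorm G with hgdef
  have hg0 : 0 ≤ g := frob_nonneg _
  have hΛ0 : 0 < Λ := lt_of_lt_of_le ha haΛ
  have hM0 : 0 ≤ M := (spec_nonneg (W 0)).trans (hM 0 (by omega))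
  have hB0 : 0 ≤ B := (spec_nonneg G).trans hB
  have hL2 : (2:ℝ) ≤ (L:ℝ) := by exact_mod_cast hL
  have hLpos : (0:ℝ) < (L:ℝ) := by linarith
  have hMp : 0 ≤ M ^ (L-2) := pow_nonneg hM0 _
  have hD : 0 < 2 * (L:ℝ) * Λ * M ^ (L-2) * B := by
    by_contra hcon
    push_neg at hcon
    have h1 : 1 / (2 * (L:ℝ) * Λ * M ^ (L-2) * B) ≤ 0 := one_div_nonpos.mpr hcon
    linarith
  have hηD : η * (2 * (L:ℝ) * Λ * M ^ (L-2) * B) ≤ 1 := by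
    rw [← le_div_iff₀ hD]
    exact hηs
  set ε : ℝ := η * Λ * (M ^ (L-2) * B) with hεdef
  have hε0 : 0 ≤ ε :=
    mul_nonneg (mul_nonneg hη0.le hΛ0.le) (mul_nonneg hMp hB0)
  have hε1 : 2 * (L:ℝ) * ε ≤ 1 := by
    have heq : 2 * (L:ℝ) * ε = η * (2 * (L:ℝ) * Λ * M ^ (L-2) * B) := by
      rw [hεdef]; ring
    rw [heq]; exact hηD
  set c : ℝ := η * a with hcdef
  have hc0 : 0 < c := mul_pos hη0 ha
  have hcηΛ : c ≤ η * Λ := by rw [hcdef]; exact mul_le_mul_of_nonneg_left haΛ hη0.le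
  have hcε : c * (M ^ (L-2) * B) ≤ ε := by
    rw [hεdef]
    exact mul_le_mul_of_nonneg_right hcηΛ (mul_nonneg hMp hB0)
  set N : ℝ := M * (1 + ε) with hNdef
  have hMN : M ≤ N := by
    rw [hNdef]
    nlinarith [mul_nonneg hM0 hε0]
  have hN0 : 0 ≤ N := hM0.trans hMN
  -- bounds on partial products
  have hQspec : ∀ l, l ≤ L → specNorm (Q l) ≤ M ^ l := by
    intro l
    induction l with
    | zero =>
      intro _
      rw [hQ0, pow_zero]
      exact spec_one_le
    | succ k ih =>
      intro hk
      have hkL : k < L := by omega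
      rw [hQs k hkL]
      calc specNorm (W k * Q k) ≤ specNorm (W k) * specNorm (Q k) := spec_mul_le _ _
        _ ≤ M * M ^ k := mul_le_mul (hM k hkL) (ih (by omega)) (spec_nonneg _) hM0
        _ = M ^ (k+1) := by rw [pow_succ]; ring
  have hPspec : ∀ k l, l + k = L → specNorm (P l) ≤ M ^ k := by
    intro k
    induction k with
    | zero =>
      intro l hl
      have hlL : l = L := by omega
      subst hlL
      rw [hPL, pow_zero]
      exact spec_one_le
    | succ j ih =>
      intro l hl
      have hlL : l < L := by omega
      rw [hPs l hlL]
      calc specNorm (P (l+1) * W l) ≤ specNorm (P (l+1)) * specNorm (W l) := spec_mul_le _ _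
        _ ≤ M ^ j * M :=
          mul_le_mul (ih (l+1) (by omega)) (hM l hlL) (spec_nonneg _) (pow_nonneg hM0 j)
        _ = M ^ (j+1) := (pow_succ M j).symm
  have hK0 : 0 ≤ c * (M ^ (L-1) * g) :=
    mul_nonneg hc0.le (mul_nonneg (pow_nonneg hM0 _) hg0)
  -- Frobenius and spectral bounds on the gradient factor
  have hXfrob : ∀ l, l < L → frobNorm ((P (l+1))ᵀ * G * (Q l)ᵀ) ≤ M ^ (L-1) * g := by
    intro l hl
    have h1 : specNorm ((P (l+1))ᵀ) ≤ M ^ (L-1-l) :=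
      (spec_transpose_le _).trans (hPspec (L-1-l) (l+1) (by omega))
    have h2 : specNorm ((Q l)ᵀ) ≤ M ^ l :=
      (spec_transpose_le _).trans (hQspec l (by omega))
    have hpow : M ^ (L-1-l) * M ^ l = M ^ (L-1) := by
      rw [← pow_add]; congr 1; omega
    calc frobNorm ((P (l+1))ᵀ * G * (Q l)ᵀ)
        ≤ frobNorm ((P (l+1))ᵀ * G) * specNorm ((Q l)ᵀ) := frob_mul_le_right _ _
      _ ≤ (specNorm ((P (l+1))ᵀ) * frobNorm G) * specNorm ((Q l)ᵀ) :=
          mul_le_mul_of_nonneg_right (frob_mul_le_left _ _) (spec_nonneg _)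
      _ ≤ (M ^ (L-1-l) * g) * M ^ l := by
          apply mul_le_mul _ h2 (spec_nonneg _) (mul_nonneg (pow_nonneg hM0 _) hg0)
          exact mul_le_mul h1 le_rfl hg0 (pow_nonneg hM0 _)
      _ = M ^ (L-1) * g := by rw [mul_right_comm, hpow]
  have hXspec : ∀ l, l < L → specNorm ((P (l+1))ᵀ * G * (Q l)ᵀ) ≤ M ^ (L-1) * B := by
    intro l hl
    have h1 : specNorm ((P (l+1))ᵀ) ≤ M ^ (L-1-l) :=
      (spec_transpose_le _).trans (hPspec (L-1-l) (l+1) (by omega))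
    have h2 : specNorm ((Q l)ᵀ) ≤ M ^ l :=
      (spec_transpose_le _).trans (hQspec l (by omega))
    have hpow : M ^ (L-1-l) * M ^ l = M ^ (L-1) := by
      rw [← pow_add]; congr 1; omega
    calc specNorm ((P (l+1))ᵀ * G * (Q l)ᵀ)
        ≤ specNorm ((P (l+1))ᵀ * G) * specNorm ((Q l)ᵀ) := spec_mul_le _ _
      _ ≤ (specNorm ((P (l+1))ᵀ) * specNorm G) * specNorm ((Q l)ᵀ) :=
          mul_le_mul_of_nonneg_right (spec_mul_le _ _) (spec_nonneg _)
      _ ≤ (M ^ (L-1-l) * B) * M ^ l := by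
          apply mul_le_mul _ h2 (spec_nonneg _) (mul_nonneg (pow_nonneg hM0 _) hB0)
          exact mul_le_mul h1 hB (spec_nonneg _) (pow_nonneg hM0 _)
      _ = M ^ (L-1) * B := by rw [mul_right_comm, hpow]
  -- spectral bound on the updated factors
  have hW' : ∀ l, l < L → specNorm (W' l) ≤ N := by
    intro l hl
    rw [hupd l hl]
    have hs : specNorm (c • ((P (l+1))ᵀ * G * (Q l)ᵀ)) ≤ c * (M ^ (L-1) * B) := by
      calc specNorm (c • ((P (l+1))ᵀ * G * (Q l)ᵀ))
          ≤ |c| * specNorm ((P (l+1))ᵀ * G * (Q l)ᵀ) := spec_smul_le _ _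
        _ = c * specNorm ((P (l+1))ᵀ * G * (Q l)ᵀ) := by rw [abs_of_pos hc0]
        _ ≤ c * (M ^ (L-1) * B) := mul_le_mul_of_nonneg_left (hXspec l hl) hc0.le
    have hpow2 : M ^ (L-1) = M ^ (L-2) * M := by
      rw [← pow_succ]; congr 1; omega
    have hNb : c * (M ^ (L-1) * B) ≤ ε * M := by
      rw [hpow2]
      calc c * (M ^ (L-2) * M * B) = (c * (M ^ (L-2) * B)) * M := by ring
        _ ≤ ε * M := mul_le_mul_of_nonneg_right hcε hM0
    calc specNorm (W l - c • ((P (l+1))ᵀ * G * (Q l)ᵀ))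
        ≤ specNorm (W l) + specNorm (c • ((P (l+1))ᵀ * G * (Q l)ᵀ)) := spec_sub_le _ _
      _ ≤ M + ε * M := add_le_add (hM l hl) (hs.trans hNb)
      _ = N := by rw [hNdef]; ring
  -- Frobenius bound on the update increments
  have hΔ : ∀ l, l < L → frobNorm (W' l - W l) ≤ c * (M ^ (L-1) * g) := by
    intro l hl
    rw [hupd l hl, sub_sub_cancel_left, frob_neg, frob_smul, abs_of_pos hc0]
    exact mul_le_mul_of_nonneg_left (hXfrob l hl) hc0.le
  -- main induction
  have key : ∀ l, l ≤ L →
      frobNorm (Q' l - Q l) ≤ (l:ℝ) * (c * (M ^ (L-1) * g)) * N ^ (l-1) := by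
    intro l
    induction l with
    | zero =>
      intro _
      rw [hQ0, hQ0', sub_self]
      simp [frob_zero]
    | succ k ih =>
      intro hk
      have hkL : k < L := by omega
      have ihk := ih (by omega)
      rw [hQs k hkL, hQs' k hkL]
      have split : W' k * Q' k - W k * Q k
          = W' k * (Q' k - Q k) + (W' k - W k) * Q k := by
        rw [Matrix.mul_sub, Matrix.sub_mul]
        abel
      rw [split]
      have t1 : frobNorm (W' k * (Q' k - Q k))
          ≤ N * ((k:ℝ) * (c * (M ^ (L-1) * g)) * N ^ (k-1)) := by
        calc frobNorm (W' k * (Q' k - Q k))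
            ≤ specNorm (W' k) * frobNorm (Q' k - Q k) := frob_mul_le_left _ _
          _ ≤ N * ((k:ℝ) * (c * (M ^ (L-1) * g)) * N ^ (k-1)) :=
            mul_le_mul (hW' k hkL) ihk (frob_nonneg _) hN0
      have t2 : frobNorm ((W' k - W k) * Q k) ≤ (c * (M ^ (L-1) * g)) * N ^ k := by
        calc frobNorm ((W' k - W k) * Q k)
            ≤ frobNorm (W' k - W k) * specNorm (Q k) := frob_mul_le_right _ _
          _ ≤ (c * (M ^ (L-1) * g)) * M ^ k :=
            mul_le_mul (hΔ k hkL) (hQspec k hkL.le) (spec_nonneg _) hK0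
          _ ≤ (c * (M ^ (L-1) * g)) * N ^ k :=
            mul_le_mul_of_nonneg_left (pow_le_pow_left₀ hM0 hMN k) hK0
      calc frobNorm (W' k * (Q' k - Q k) + (W' k - W k) * Q k)
          ≤ frobNorm (W' k * (Q' k - Q k)) + frobNorm ((W' k - W k) * Q k) :=
            frob_add_le _ _
        _ ≤ N * ((k:ℝ) * (c * (M ^ (L-1) * g)) * N ^ (k-1))
              + (c * (M ^ (L-1) * g)) * N ^ k := add_le_add t1 t2
        _ ≤ ((k+1 : ℕ) : ℝ) * (c * (M ^ (L-1) * g)) * N ^ ((k+1)-1) := by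
            have hred : (k+1) - 1 = k := by omega
            rw [hred]
            rcases Nat.eq_zero_or_pos k with rfl | hkpos
            · norm_num
            · have hNN : N * N ^ (k-1) = N ^ k := by
                rw [← pow_succ']; congr 1; omega
              have heq : N * ((k:ℝ) * (c * (M ^ (L-1) * g)) * N ^ (k-1))
                    + (c * (M ^ (L-1) * g)) * N ^ k
                  = ((k:ℝ) + 1) * (c * (M ^ (L-1) * g)) * N ^ k := by
                rw [show N * ((k:ℝ) * (c * (M ^ (L-1) * g)) * N ^ (k-1))
                    = (k:ℝ) * (c * (M ^ (L-1) * g)) * (N * N ^ (k-1)) from by ring, hNN]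
                ring
              rw [heq]
              push_cast
              exact le_rfl
  -- final assembly
  have hF := key L le_rfl
  have hF2 : frobNorm (Q' L - Q L) ^ 2
      ≤ ((L:ℝ) * (c * (M ^ (L-1) * g)) * N ^ (L-1)) ^ 2 :=
    pow_le_pow_left₀ (frob_nonneg _) hF 2
  have hM4 : (M ^ (L-1)) ^ 2 * (M ^ (L-1)) ^ 2 = M ^ (4*L-4) := by
    rw [← pow_mul, ← pow_add]; congr 1; omega
  have hM2 : (M ^ (L-2)) ^ 2 = M ^ (2*L-4) := by
    rw [← pow_mul]; congr 1; omega
  have hM6 : M ^ (6*L-8) = M ^ (4*L-4) * M ^ (2*L-4) := by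
    rw [← pow_add]; congr 1; omega
  have hpe : ((1+ε) ^ (L-1)) ^ 2 = (1+ε) ^ (2*(L-1)) := by
    rw [← pow_mul]; congr 1; omega
  have hexp : (1+ε) ^ (2*(L-1)) ≤ 2 + 4*(L:ℝ)^2*ε^2 := by
    have h1ε : 0 ≤ 1 + ε := by linarith
    have hstep : (1+ε) ^ (2*(L-1)) ≤ Real.exp (2*(L:ℝ)*ε) := by
      calc (1+ε) ^ (2*(L-1)) ≤ Real.exp ε ^ (2*(L-1)) :=
            pow_le_pow_left₀ h1ε (by linarith [Real.add_one_le_exp ε]) _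
        _ = Real.exp (((2*(L-1) : ℕ) : ℝ) * ε) := (Real.exp_nat_mul ε _).symm
        _ ≤ Real.exp (2*(L:ℝ)*ε) := by
            apply Real.exp_le_exp.mpr
            have hcast : ((2*(L-1) : ℕ) : ℝ) ≤ 2*(L:ℝ) := by
              have hn : (2*(L-1) : ℕ) ≤ 2*L := by omega
              calc ((2*(L-1) : ℕ) : ℝ) ≤ ((2*L : ℕ) : ℝ) := by exact_mod_cast hn
                _ = 2*(L:ℝ) := by push_cast; ring
            exact mul_le_mul_of_nonneg_right hcast hε0
    have ht0 : 0 ≤ 2*(L:ℝ)*ε := mul_nonneg (by linarith) hε0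
    have hb := Real.exp_bound' ht0 hε1 (n := 2) (by norm_num)
    rw [Finset.sum_range_succ, Finset.sum_range_one] at hb
    norm_num at hb
    calc (1+ε) ^ (2*(L-1)) ≤ Real.exp (2*(L:ℝ)*ε) := hstep
      _ ≤ 2 + (2*(L:ℝ)*ε)^2 := by nlinarith [hb, hε1, sq_nonneg (2*(L:ℝ)*ε)]
      _ = 2 + 4*(L:ℝ)^2*ε^2 := by ring
  have hM4nn : 0 ≤ M ^ (4*L-4) := pow_nonneg hM0 _
  have hM2nn : 0 ≤ M ^ (2*L-4) := pow_nonneg hM0 _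
  calc frobNorm (Q' L - Q L) ^ 2
      ≤ ((L:ℝ) * (c * (M ^ (L-1) * g)) * N ^ (L-1)) ^ 2 := hF2
    _ = (L:ℝ)^2 * c^2 * M ^ (4*L-4) * (1+ε)^(2*(L-1)) * g^2 := by
        rw [hNdef, mul_pow M (1+ε) (L-1)]
        rw [show ((L:ℝ) * (c * (M ^ (L-1) * g)) * (M ^ (L-1) * (1+ε) ^ (L-1))) ^ 2
            = (L:ℝ)^2 * c^2 * ((M ^ (L-1)) ^ 2 * (M ^ (L-1)) ^ 2)
              * ((1+ε) ^ (L-1)) ^ 2 * g^2 from by ring]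
        rw [hM4, hpe]
    _ ≤ (L:ℝ)^2 * c^2 * M ^ (4*L-4) * (2 + 4*(L:ℝ)^2*ε^2) * g^2 := by
        have base : 0 ≤ (L:ℝ)^2 * c^2 * M ^ (4*L-4) :=
          mul_nonneg (mul_nonneg (sq_nonneg _) (sq_nonneg _)) hM4nn
        exact mul_le_mul_of_nonneg_right
          (mul_le_mul_of_nonneg_left hexp base) (sq_nonneg g)
    _ ≤ (2 * η ^ 2 * (L : ℝ) ^ 2 * Λ ^ 2 * M ^ (4 * L - 4)
          + 8 * η ^ 4 * (L : ℝ) ^ 4 * Λ ^ 4 * M ^ (6 * L - 8) * B ^ 2) * g ^ 2 := by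
        apply mul_le_mul_of_nonneg_right _ (sq_nonneg g)
        rw [hM6]
        have hc2 : c^2 ≤ η^2 * Λ^2 := by nlinarith [hc0, hcηΛ]
        have hε2 : ε^2 = η^2*Λ^2*((M ^ (L-2))^2*B^2) := by rw [hεdef]; ring
        rw [hM2] at hε2
        rw [hε2]
        have T1 : (L:ℝ)^2 * (c^2 * M ^ (4*L-4)) ≤ (L:ℝ)^2 * (η^2*Λ^2 * M ^ (4*L-4)) :=
          mul_le_mul_of_nonneg_left (mul_le_mul_of_nonneg_right hc2 hM4nn) (sq_nonneg _)
        have h4nn : 0 ≤ 4*(L:ℝ)^4*η^2*Λ^2*(M ^ (2*L-4))*B^2 := by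
          have : (0:ℝ) ≤ (L:ℝ)^4 := by positivity
          have h1 : (0:ℝ) ≤ 4*(L:ℝ)^4*η^2*Λ^2 := by positivity
          exact mul_nonneg (mul_nonneg h1 hM2nn) (sq_nonneg B)
        have T2 : (4*(L:ℝ)^4*η^2*Λ^2*(M ^ (2*L-4))*B^2) * (c^2 * M ^ (4*L-4))
            ≤ (4*(L:ℝ)^4*η^2*Λ^2*(M ^ (2*L-4))*B^2) * (η^2*Λ^2 * M ^ (4*L-4)) :=
          mul_le_mul_of_nonneg_left (mul_le_mul_of_nonneg_right hc2 hM4nn) h4nn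
        have S : 0 ≤ η^4 * Λ^4 * (L:ℝ)^4 * (M ^ (4*L-4) * M ^ (2*L-4)) * B^2 := by
          have h1 : (0:ℝ) ≤ η^4 * Λ^4 * (L:ℝ)^4 := by positivity
          exact mul_nonneg (mul_nonneg h1 (mul_nonneg hM4nn hM2nn)) (sq_nonneg B)
        linarith [T1, T2, S]
end

section
/- Let W̃, W(1), …, W(t) be successive product matrices of a deep matrix factorization in ℝ^{n_L×n_0} with ‖∇ℓ(W̃)‖_F ≤ τ, where ℓ(W) = (1/2)‖W − W*‖_F², and fix σ > 0, η > 0, r > 0, Λ ≥ 1, M ≥ 1, B ≥ 1, L ≥ 2. Suppose: (i) for all i ∈ {1,…,t−1}, ℓ(W(i+1)) − ℓ(W(i)) ≤ −(1/2)·σ^{(2L−2)/L}·η·‖∇ℓ(W(i))‖_F² and ‖W(i+1) − W(i)‖_F² ≤ 8η²L⁴Λ⁴M^{6L−8}B²·‖∇ℓ(W(i))‖_F²; (ii) the first step satisfies ‖W(1) − W̃‖_F² ≤ 2(r²L²Λ²M^{4L−4} + 4r⁴L⁴Λ⁴M^{6L−8}B²)τ² with 4L²Λ²M^{2L−4}B²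 ≥ 1 and r ≤ 1/(2LΛM^{L−2}B), and ℓ(W(1)) − ℓ(W̃) ≤ 8r²L⁴Λ⁴M^{6L−8}B²τ²; (iii) ℓ(W(t)) − ℓ(W̃) ≥ −ℓ_thresh. Then ‖W(t) − W̃‖_F² ≤ t·η·σ^{(2−2L)/L}·H·(ℓ_thresh + Q) + 4Q, where H = 32L⁴Λ⁴M^{6L−8}B² and Q = 8r²L⁴Λ⁴M^{6L−8}B²τ². -/
open scoped BigOperators
open Matrix

lemma frob_nonneg {m n : Type*} [Fintype m] [Fintype n] (A : Matrix m n ℝ) :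
    0 ≤ frobNorm A := Real.sqrt_nonneg _

lemma frob_sq_nonneg {m n : Type*} [Fintype m] [Fintype n] (A : Matrix m n ℝ) :
    0 ≤ frobNorm A ^ 2 := sq_nonneg _

lemma frob_eq_norm {m n : Type*} [Fintype m] [Fintype n] (A : Matrix m n ℝ) :
    frobNorm A = ‖(WithLp.equiv 2 ((m × n) → ℝ)).symm (fun ij => A ij.1 ij.2)‖ := by
  rw [EuclideanSpace.norm_eq, frobNorm]
  simp [WithLp.equiv_symm_apply, PiLp.toLp_apply, Real.norm_eq_abs, sq_abs, Fintype.sum_prod_type]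

lemma frob_triangle {m n : Type*} [Fintype m] [Fintype n] (A B : Matrix m n ℝ) :
    frobNorm (A + B) ≤ frobNorm A + frobNorm B := by
  rw [frob_eq_norm, frob_eq_norm A, frob_eq_norm B]
  have h : (WithLp.equiv 2 ((m × n) → ℝ)).symm (fun ij => (A + B) ij.1 ij.2)
      = (WithLp.equiv 2 ((m × n) → ℝ)).symm (fun ij => A ij.1 ij.2)
        + (WithLp.equiv 2 ((m × n) → ℝ)).symm (fun ij => B ij.1 ij.2) := by
    rw [WithLp.equiv_symm_apply, ← WithLp.toLp_add]
    rfl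
  rw [h]
  exact norm_add_le _ _

lemma frob_triangle3 {m n : Type*} [Fintype m] [Fintype n] (X Y Z : Matrix m n ℝ) :
    frobNorm (X - Z) ≤ frobNorm (X - Y) + frobNorm (Y - Z) := by
  have : X - Z = (X - Y) + (Y - Z) := by abel
  rw [this]; exact frob_triangle _ _

lemma frob_zero {m n : Type*} [Fintype m] [Fintype n] :
    frobNorm (0 : Matrix m n ℝ) = 0 := by
  simp [frobNorm]

lemma frob_self {m n : Type*} [Fintype m] [Fintype n] (X : Matrix m n ℝ) :
    frobNorm (X - X) = 0 := by
  simp [frobNorm, Matrix.sub_apply]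

lemma one_le_mulR {a b : ℝ} (ha : 1 ≤ a) (hb : 1 ≤ b) : 1 ≤ a * b := by nlinarith

lemma sq_le_two_sq_add_two_sq {x y z : ℝ} (hx : 0 ≤ x) (h : x ≤ y + z) :
    x ^ 2 ≤ 2 * y ^ 2 + 2 * z ^ 2 := by
  nlinarith [sq_nonneg (y - z), mul_self_le_mul_self hx h]
set_option maxHeartbeats 2000000 in
/-- Distance bound (Lemma A4) for the product matrices `W̃, W(1), …, W(t)` of a deep
matrix factorization with loss `ℓ(W) = ½‖W − W*‖_F²` and gradient `∇ℓ(W) = W − W*`,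
assuming per-step decrease and step-size bounds (i), a first-step bound (ii), and
a lower bound on the total decrease (iii). Here `H = 32L⁴Λ⁴M^{6L−8}B²` and
`Q = 8r²L⁴Λ⁴M^{6L−8}B²τ²` are written out explicitly. -/
theorem stmt9 (L : ℕ) (hL : 2 ≤ L) (p q : ℕ)
    (Wstar Wtil : Matrix (Fin p) (Fin q) ℝ) (Wseq : ℕ → Matrix (Fin p) (Fin q) ℝ)
    (σ η r Λ M B τ ℓthresh : ℝ)
    (hσ : 0 < σ) (hη : 0 < η) (hr : 0 < r) (hΛ : 1 ≤ Λ) (hM : 1 ≤ M) (hB : 1 ≤ B)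
    (t : ℕ) (ht : 1 ≤ t)
    (hgrad : frobNorm (Wtil - Wstar) ≤ τ)
    (hdec : ∀ i, 1 ≤ i → i < t →
      (1 / 2) * frobNorm (Wseq (i + 1) - Wstar) ^ 2
          - (1 / 2) * frobNorm (Wseq i - Wstar) ^ 2
        ≤ -(1 / 2) * σ ^ ((2 * (L : ℝ) - 2) / (L : ℝ)) * η
            * frobNorm (Wseq i - Wstar) ^ 2)
    (hstep : ∀ i, 1 ≤ i → i < t →
      frobNorm (Wseq (i + 1) - Wseq i) ^ 2
        ≤ 8 * η ^ 2 * (L : ℝ) ^ 4 * Λ ^ 4 * M ^ (6 * L - 8) * B ^ 2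
            * frobNorm (Wseq i - Wstar) ^ 2)
    (hfirst : frobNorm (Wseq 1 - Wtil) ^ 2
        ≤ 2 * (r ^ 2 * (L : ℝ) ^ 2 * Λ ^ 2 * M ^ (4 * L - 4)
            + 4 * r ^ 4 * (L : ℝ) ^ 4 * Λ ^ 4 * M ^ (6 * L - 8) * B ^ 2) * τ ^ 2)
    (hconst : (1 : ℝ) ≤ 4 * (L : ℝ) ^ 2 * Λ ^ 2 * M ^ (2 * L - 4) * B ^ 2)
    (hrs : r ≤ 1 / (2 * (L : ℝ) * Λ * M ^ (L - 2) * B))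
    (hfirstf : (1 / 2) * frobNorm (Wseq 1 - Wstar) ^ 2
          - (1 / 2) * frobNorm (Wtil - Wstar) ^ 2
        ≤ 8 * r ^ 2 * (L : ℝ) ^ 4 * Λ ^ 4 * M ^ (6 * L - 8) * B ^ 2 * τ ^ 2)
    (hlow : -ℓthresh ≤ (1 / 2) * frobNorm (Wseq t - Wstar) ^ 2
          - (1 / 2) * frobNorm (Wtil - Wstar) ^ 2) :
    frobNorm (Wseq t - Wtil) ^ 2
      ≤ (t : ℝ) * η * σ ^ ((2 - 2 * (L : ℝ)) / (L : ℝ))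
          * (32 * (L : ℝ) ^ 4 * Λ ^ 4 * M ^ (6 * L - 8) * B ^ 2)
          * (ℓthresh
            + 8 * r ^ 2 * (L : ℝ) ^ 4 * Λ ^ 4 * M ^ (6 * L - 8) * B ^ 2 * τ ^ 2)
        + 4 * (8 * r ^ 2 * (L : ℝ) ^ 4 * Λ ^ 4 * M ^ (6 * L - 8) * B ^ 2 * τ ^ 2) := by
  -- basic positivity facts
  have hL1 : (1 : ℝ) ≤ (L : ℝ) := by exact_mod_cast Nat.one_le_of_lt hL
  have hL2 : (2 : ℝ) ≤ (L : ℝ) := by exact_mod_cast hL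
  have hLpos : (0 : ℝ) < (L : ℝ) := by linarith
  have hΛpos : (0 : ℝ) < Λ := by linarith
  have hMpos : (0 : ℝ) < M := by linarith
  have hBpos : (0 : ℝ) < B := by linarith
  have hM68 : (1 : ℝ) ≤ M ^ (6 * L - 8) := one_le_pow₀ hM
  have hM44 : (1 : ℝ) ≤ M ^ (4 * L - 4) := one_le_pow₀ hM
  have hML2 : (1 : ℝ) ≤ M ^ (L - 2) := one_le_pow₀ hM
  -- abbreviations
  set e : ℝ := (2 * (L : ℝ) - 2) / (L : ℝ) with he
  set s : ℝ := σ ^ e with hsdef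
  have hs : 0 < s := Real.rpow_pos_of_pos hσ e
  set g : ℕ → ℝ := fun i => frobNorm (Wseq i - Wstar) ^ 2 with hgdef
  set a : ℕ → ℝ := fun i => frobNorm (Wseq (i + 1) - Wseq i) with hadef
  have hgnn : ∀ i, 0 ≤ g i := fun i => sq_nonneg _
  have hann : ∀ i, 0 ≤ a i := fun i => frob_nonneg _
  set K : ℝ := 8 * η ^ 2 * (L : ℝ) ^ 4 * Λ ^ 4 * M ^ (6 * L - 8) * B ^ 2 with hKdef
  set Q : ℝ := 8 * r ^ 2 * (L : ℝ) ^ 4 * Λ ^ 4 * M ^ (6 * L - 8) * B ^ 2 * τ ^ 2 with hQdef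
  have hKnn : 0 ≤ K := by
    have : (0:ℝ) < M ^ (6*L-8) := by linarith
    rw [hKdef]; positivity
  -- exponent identity
  have hexp : σ ^ ((2 - 2 * (L : ℝ)) / (L : ℝ)) = s⁻¹ := by
    rw [hsdef, he, ← Real.rpow_neg hσ.le]
    congr 1
    ring
  -- Step A: triangle inequality chain
  have keyA : ∀ n, 1 ≤ n →
      frobNorm (Wseq n - Wseq 1) ≤ ∑ i ∈ Finset.Ico 1 n, a i := by
    intro n hn
    induction n, hn using Nat.le_induction with
    | base => simp [frob_zero]
    | succ n hn ih =>
      rw [Finset.sum_Ico_succ_top hn]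
      calc frobNorm (Wseq (n + 1) - Wseq 1)
          ≤ frobNorm (Wseq (n + 1) - Wseq n) + frobNorm (Wseq n - Wseq 1) :=
            frob_triangle3 _ _ _
        _ ≤ a n + ∑ i ∈ Finset.Ico 1 n, a i := by
            have := ih
            simp only [hadef]
            linarith
        _ = (∑ i ∈ Finset.Ico 1 n, a i) + a n := by ring
  -- telescoping
  have htel : ∀ n, 1 ≤ n →
      ∑ i ∈ Finset.Ico 1 n, ((1/2) * g i - (1/2) * g (i+1)) = (1/2) * g 1 - (1/2) * g n := by
    intro n hn
    induction n, hn using Nat.le_induction with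
    | base => simp
    | succ n hn ih =>
      rw [Finset.sum_Ico_succ_top hn, ih]
      ring
  set Sg : ℝ := ∑ i ∈ Finset.Ico 1 t, g i with hSgdef
  have hSgnn : 0 ≤ Sg := Finset.sum_nonneg fun i _ => hgnn i
  -- Step D: gradient sum bound
  have hsumg : (1/2) * s * η * Sg ≤ (1/2) * g 1 - (1/2) * g t := by
    rw [hSgdef, Finset.mul_sum, ← htel t ht]
    apply Finset.sum_le_sum
    intro i hi
    rw [Finset.mem_Ico] at hi
    have h := hdec i hi.1 hi.2
    simp only [hgdef]
    linarith [h]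
  -- Step C: step sum bound
  have hsumd : ∑ i ∈ Finset.Ico 1 t, (a i) ^ 2 ≤ K * Sg := by
    rw [hSgdef, Finset.mul_sum]
    apply Finset.sum_le_sum
    intro i hi
    rw [Finset.mem_Ico] at hi
    exact hstep i hi.1 hi.2
  -- Step B: Cauchy–Schwarz
  have hcs : (∑ i ∈ Finset.Ico 1 t, a i) ^ 2
      ≤ ((t : ℝ) - 1) * ∑ i ∈ Finset.Ico 1 t, (a i) ^ 2 := by
    have h := sq_sum_le_card_mul_sum_sq (s := Finset.Ico 1 t) (f := a)
    have hcard : ((Finset.Ico 1 t).card : ℝ) = (t : ℝ) - 1 := by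
      rw [Nat.card_Ico]
      push_cast [Nat.cast_sub ht]
      ring
    calc (∑ i ∈ Finset.Ico 1 t, a i) ^ 2
        ≤ ((Finset.Ico 1 t).card : ℝ) * ∑ i ∈ Finset.Ico 1 t, (a i) ^ 2 := h
      _ = ((t : ℝ) - 1) * ∑ i ∈ Finset.Ico 1 t, (a i) ^ 2 := by rw [hcard]
  -- combine: squared distance from W1 to Wt
  have hA1 : frobNorm (Wseq t - Wseq 1) ^ 2 ≤ ((t : ℝ) - 1) * (K * Sg) := by
    have h1 := keyA t ht
    have h2 : frobNorm (Wseq t - Wseq 1) ^ 2 ≤ (∑ i ∈ Finset.Ico 1 t, a i) ^ 2 := by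
      apply pow_le_pow_left₀ (frob_nonneg _) h1
    have h3 : ((t : ℝ) - 1) * ∑ i ∈ Finset.Ico 1 t, (a i) ^ 2 ≤ ((t : ℝ) - 1) * (K * Sg) := by
      apply mul_le_mul_of_nonneg_left hsumd
      have : (1 : ℝ) ≤ (t : ℝ) := by exact_mod_cast ht
      linarith
    linarith
  -- loss decrease across trajectory
  have hD : (1/2) * g 1 - (1/2) * g t ≤ ℓthresh + Q := by
    simp only [hgdef]
    linarith [hfirstf, hlow]
  have hQthresh : 0 ≤ ℓthresh + Q := by
    have h0 : 0 ≤ (1/2) * s * η * Sg := by positivity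
    linarith
  -- bound Sg
  have hSg_le : s * η * Sg ≤ 2 * (ℓthresh + Q) := by linarith
  -- second term : first-step bound
  have hM1 : M ^ (4 * L - 4) * M ^ (2 * L - 4) = M ^ (6 * L - 8) := by
    rw [← pow_add]
    congr 1
    omega
  have hX1 : r ^ 2 * (L : ℝ) ^ 2 * Λ ^ 2 * M ^ (4 * L - 4)
      ≤ 4 * r ^ 2 * (L : ℝ) ^ 4 * Λ ^ 4 * M ^ (6 * L - 8) * B ^ 2 := by
    have base : (0:ℝ) ≤ r ^ 2 * (L : ℝ) ^ 2 * Λ ^ 2 * M ^ (4 * L - 4) := by positivity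
    have h := mul_le_mul_of_nonneg_left hconst base
    rw [mul_one] at h
    calc r ^ 2 * (L : ℝ) ^ 2 * Λ ^ 2 * M ^ (4 * L - 4)
        ≤ r ^ 2 * (L : ℝ) ^ 2 * Λ ^ 2 * M ^ (4 * L - 4)
            * (4 * (L : ℝ) ^ 2 * Λ ^ 2 * M ^ (2 * L - 4) * B ^ 2) := h
      _ = 4 * r ^ 2 * (L : ℝ) ^ 4 * Λ ^ 4 * (M ^ (4*L-4) * M ^ (2*L-4)) * B ^ 2 := by ring
      _ = 4 * r ^ 2 * (L : ℝ) ^ 4 * Λ ^ 4 * M ^ (6 * L - 8) * B ^ 2 := by rw [hM1]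
  have hr1 : r ≤ 1 := by
    have hden : (1 : ℝ) ≤ 2 * (L : ℝ) * Λ * M ^ (L - 2) * B := by
      have h1 := one_le_mulR (one_le_mulR (one_le_mulR hL1 hΛ) hML2) hB
      linarith [h1]
    have : 1 / (2 * (L : ℝ) * Λ * M ^ (L - 2) * B) ≤ 1 := by
      rw [div_le_one (by linarith)]
      exact hden
    linarith
  have hr42 : r ^ 4 ≤ r ^ 2 := pow_le_pow_of_le_one hr.le hr1 (by norm_num)
  have hX2 : 4 * r ^ 4 * (L : ℝ) ^ 4 * Λ ^ 4 * M ^ (6 * L - 8) * B ^ 2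
      ≤ 4 * r ^ 2 * (L : ℝ) ^ 4 * Λ ^ 4 * M ^ (6 * L - 8) * B ^ 2 := by
    have hXnn : (0:ℝ) ≤ 4 * (L : ℝ) ^ 4 * Λ ^ 4 * M ^ (6 * L - 8) * B ^ 2 := by positivity
    linarith [mul_le_mul_of_nonneg_right hr42 hXnn]
  have hb : frobNorm (Wseq 1 - Wtil) ^ 2 ≤ 2 * Q := by
    have hτ2 : (0:ℝ) ≤ 2 * τ ^ 2 := by positivity
    linarith [mul_le_mul_of_nonneg_right (add_le_add hX1 hX2) hτ2, hfirst]
  -- final triangle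
  have htri : frobNorm (Wseq t - Wtil)
      ≤ frobNorm (Wseq t - Wseq 1) + frobNorm (Wseq 1 - Wtil) := frob_triangle3 _ _ _
  have hsq : frobNorm (Wseq t - Wtil) ^ 2
      ≤ 2 * frobNorm (Wseq t - Wseq 1) ^ 2 + 2 * frobNorm (Wseq 1 - Wtil) ^ 2 :=
    sq_le_two_sq_add_two_sq (frob_nonneg _) htri
  -- first term bound
  have hterm1 : 2 * (((t : ℝ) - 1) * (K * Sg))
      ≤ (t : ℝ) * η * s⁻¹ * (32 * (L : ℝ) ^ 4 * Λ ^ 4 * M ^ (6 * L - 8) * B ^ 2)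
          * (ℓthresh + Q) := by
    have ht1 : (1 : ℝ) ≤ (t : ℝ) := by exact_mod_cast ht
    have hKSg : 0 ≤ K * Sg := mul_nonneg hKnn hSgnn
    have c1 : 2 * (((t : ℝ) - 1) * (K * Sg)) ≤ 2 * ((t : ℝ) * (K * Sg)) := by
      have := mul_le_mul_of_nonneg_right (show (t:ℝ) - 1 ≤ (t:ℝ) by linarith) hKSg
      linarith [this]
    have hSgle : Sg ≤ 2 * (ℓthresh + Q) / (s * η) := by
      rw [le_div_iff₀ (by positivity)]
      linarith [hSg_le]
    have c2 : 2 * ((t : ℝ) * (K * Sg)) ≤ 2 * ((t : ℝ) * (K * (2 * (ℓthresh + Q) / (s * η)))) := by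
      have h5 : K * Sg ≤ K * (2 * (ℓthresh + Q) / (s * η)) :=
        mul_le_mul_of_nonneg_left hSgle hKnn
      have h6 := mul_le_mul_of_nonneg_left h5 (show (0:ℝ) ≤ (t:ℝ) by linarith)
      linarith [h6]
    have c3 : 2 * ((t : ℝ) * (K * (2 * (ℓthresh + Q) / (s * η))))
        = (t : ℝ) * η * s⁻¹ * (32 * (L : ℝ) ^ 4 * Λ ^ 4 * M ^ (6 * L - 8) * B ^ 2)
            * (ℓthresh + Q) := by
      rw [hKdef]
      field_simp
      ring
    linarith
  rw [hexp]
  have := hA1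
  linarith [hsq, hb, hterm1, hA1]
end

section
/- Let Â ∈ ℝ^{n×n} be a diagonal matrix with strictly positive diagonal entries, H ∈ ℝ^{n×n} a symmetric matrix with λ_min( Â^{1/2} H Â^{1/2} ) = −γ for some γ > 0, and let η > 0. Then for every matrix G ∈ ℝ^{n×m} and every natural number t, ‖(I − η Â H)^t Â G‖_F² ≥ (1 + ηγ)^{2t} · λ_min( Â G Gᵀ Âᵀ ). -/
open scoped BigOperators
open Matrix

/-- Smallest eigenvalue (Rayleigh quotient infimum) of a symmetric real matrix. -/
noncomputable def lambdaMin {n : Type*} [Fintype n] (H : Matrix n n ℝ) : ℝ :=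
  sInf {c | ∃ x : n → ℝ, (∑ i, x i ^ 2) = 1 ∧ c = dotProduct x (H.mulVec x)}

/-- eigenvector powers -/
lemma aux_pow_mulVec {n : ℕ} (N : Matrix (Fin n) (Fin n) ℝ) (c : ℝ) (z : Fin n → ℝ)
    (h : N *ᵥ z = c • z) (t : ℕ) : (N ^ t) *ᵥ z = c ^ t • z := by
  induction t with
  | zero => simp
  | succ k ih =>
      rw [pow_succ, ← Matrix.mulVec_mulVec, h, Matrix.mulVec_smul, ih, smul_smul, pow_succ]
      ring_nf

/-- a lower bound on all eigenvalues lower-bounds the Rayleigh quotient -/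
lemma aux_rayleigh_lower {n : ℕ} {A : Matrix (Fin n) (Fin n) ℝ} (hA : A.IsHermitian) {μ : ℝ}
    (hμ : ∀ i, μ ≤ hA.eigenvalues i) (x : Fin n → ℝ) :
    μ * ∑ i, x i ^ 2 ≤ x ⬝ᵥ A *ᵥ x := by
  have hU : (hA.eigenvectorUnitary : Matrix (Fin n) (Fin n) ℝ) *
      star (hA.eigenvectorUnitary : Matrix (Fin n) (Fin n) ℝ) = 1 :=
    Matrix.mem_unitaryGroup_iff.mp hA.eigenvectorUnitary.2
  have h1 : A - μ • 1 = (hA.eigenvectorUnitary : Matrix (Fin n) (Fin n) ℝ) *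
      Matrix.diagonal (fun i => hA.eigenvalues i - μ) *
      star (hA.eigenvectorUnitary : Matrix (Fin n) (Fin n) ℝ) := by
    have hdiag : Matrix.diagonal (fun i => hA.eigenvalues i - μ) =
        Matrix.diagonal (RCLike.ofReal ∘ hA.eigenvalues) - μ • (1 : Matrix (Fin n) (Fin n) ℝ) := by
      ext i j
      by_cases hij : i = j
      · subst hij
        simp [Matrix.diagonal_apply_eq, Matrix.one_apply_eq]
      · simp [Matrix.diagonal_apply_ne _ hij, Matrix.one_apply_ne hij]
    have hs := hA.spectral_theorem
    rw [Unitary.conjStarAlgAut_apply] at hs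
    rw [hdiag, Matrix.mul_sub, Matrix.sub_mul, ← hs]
    congr 1
    rw [Matrix.mul_smul, Matrix.smul_mul, Matrix.mul_one, hU]
  have hpsd : (A - μ • 1).PosSemidef := by
    rw [h1, Matrix.star_eq_conjTranspose]
    exact Matrix.PosSemidef.mul_mul_conjTranspose_same
      (Matrix.posSemidef_diagonal_iff.mpr (fun i => sub_nonneg.mpr (hμ i))) _
  have h2 := hpsd.dotProduct_mulVec_nonneg x
  simp only [RCLike.re_to_real, star_trivial] at h2
  rw [Matrix.sub_mulVec, dotProduct_sub, Matrix.smul_mulVec,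
    Matrix.one_mulVec, dotProduct_smul, smul_eq_mul] at h2
  have h3 : x ⬝ᵥ x = ∑ i, x i ^ 2 := by
    simp [dotProduct, sq]
  rw [h3] at h2
  linarith

set_option maxHeartbeats 1000000 in
theorem stmt13 (n m : ℕ) (d : Fin n → ℝ) (hd : ∀ i, 0 < d i)
    (H : Matrix (Fin n) (Fin n) ℝ) (hH : H.IsSymm)
    (γ : ℝ) (hγ : 0 < γ)
    (hmin : lambdaMin (Matrix.diagonal (fun i => Real.sqrt (d i)) * H *
      Matrix.diagonal (fun i => Real.sqrt (d i))) = -γ)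
    (η : ℝ) (hη : 0 < η) (G : Matrix (Fin n) (Fin m) ℝ) (t : ℕ) :
    (1 + η * γ) ^ (2 * t) *
        lambdaMin ((Matrix.diagonal d * G) * (Matrix.diagonal d * G)ᵀ)
      ≤ frobNorm (((1 - η • (Matrix.diagonal d * H)) ^ t) * (Matrix.diagonal d * G)) ^ 2 := by
  classical
  set D : Matrix (Fin n) (Fin n) ℝ := Matrix.diagonal d with hD
  set S : Matrix (Fin n) (Fin n) ℝ := Matrix.diagonal (fun i => Real.sqrt (d i)) with hS
  set A : Matrix (Fin n) (Fin n) ℝ := S * H * S with hA'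
  set B : Matrix (Fin n) (Fin m) ℝ := D * G with hB
  -- n must be positive
  have hn : 0 < n := by
    by_contra h
    push_neg at h
    interval_cases n
    have hempty : {c | ∃ x : Fin 0 → ℝ, (∑ i, x i ^ 2) = 1 ∧
        c = dotProduct x (A.mulVec x)} = ∅ := by
      ext c; simp
    rw [lambdaMin, hempty, Real.sInf_empty] at hmin
    linarith
  -- A is Hermitian
  have hAH : A.IsHermitian := by
    have : Aᵀ = A := by
      rw [hA', Matrix.transpose_mul, Matrix.transpose_mul, Matrix.diagonal_transpose, hH.eq,
        Matrix.mul_assoc]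
    simpa [Matrix.IsHermitian, Matrix.conjTranspose_eq_transpose_of_trivial] using this
  -- pick minimal eigenvalue
  haveI : Nonempty (Fin n) := ⟨⟨0, hn⟩⟩
  obtain ⟨i₀, -, hi₀⟩ := Finset.exists_min_image Finset.univ hAH.eigenvalues
    ⟨Classical.arbitrary (Fin n), Finset.mem_univ _⟩
  set μ := hAH.eigenvalues i₀ with hμdef
  have hray := fun x => aux_rayleigh_lower hAH (fun i => hi₀ i (Finset.mem_univ i)) x
  -- μ ≤ -γ
  have hμγ : μ ≤ -γ := by
    rw [← hmin, lambdaMin]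
    apply le_csInf
    · exact ⟨_, ⟨Pi.single i₀ 1, by simp [Pi.single_apply, ite_pow], rfl⟩⟩
    · rintro c ⟨x, hx1, rfl⟩
      have h := hray x
      rw [hx1, mul_one] at h
      exact h
  -- eigenvector
  set v : Fin n → ℝ := ⇑(hAH.eigenvectorBasis i₀) with hv
  have hAv : A *ᵥ v = μ • v := hAH.mulVec_eigenvectorBasis i₀
  have hvne : ∃ i, v i ≠ 0 := by
    by_contra h
    push_neg at h
    have h0 : hAH.eigenvectorBasis i₀ = 0 := by
      ext i
      exact h i
    exact hAH.eigenvectorBasis.orthonormal.ne_zero i₀ h0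
  have hsz : ∀ i, Real.sqrt (d i) ≠ 0 := fun i => (Real.sqrt_pos.mpr (hd i)).ne'
  set z : Fin n → ℝ := fun i => v i / Real.sqrt (d i) with hz
  have hDz : D *ᵥ z = S *ᵥ v := by
    funext i
    simp only [hD, hS, Matrix.mulVec_diagonal, hz]
    have hne := hsz i
    have hss : Real.sqrt (d i) * Real.sqrt (d i) = d i := Real.mul_self_sqrt (hd i).le
    field_simp
    linear_combination (-(v i)) * hss
  have hHDz : (H * D) *ᵥ z = μ • z := by
    have h2 : S *ᵥ (H *ᵥ (S *ᵥ v)) = μ • v := by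
      rw [Matrix.mulVec_mulVec, Matrix.mulVec_mulVec, ← hA']
      exact hAv
    have hDz' : (H * D) *ᵥ z = H *ᵥ (S *ᵥ v) := by
      rw [← Matrix.mulVec_mulVec, hDz]
    rw [hDz']
    funext i
    have h3 := congrFun h2 i
    have h4 : (S *ᵥ (H *ᵥ S *ᵥ v)) i = Real.sqrt (d i) * (H *ᵥ S *ᵥ v) i := by
      rw [hS, Matrix.mulVec_diagonal]
    rw [h4] at h3
    have h5 : (μ • v) i = μ * v i := rfl
    rw [h5] at h3
    have h6 : (μ • z) i = μ * (v i / Real.sqrt (d i)) := rfl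
    rw [h6, mul_div_assoc', eq_div_iff (hsz i)]
    linarith [h3]
  set c : ℝ := (1 - η * μ) ^ t with hc
  have hNz : (1 - η • (H * D)) *ᵥ z = (1 - η * μ) • z := by
    rw [Matrix.sub_mulVec, Matrix.smul_mulVec, hHDz, Matrix.one_mulVec]
    funext i
    simp only [Pi.sub_apply, Pi.smul_apply, smul_eq_mul]
    ring
  have hDHT : (1 - η • (D * H))ᵀ = 1 - η • (H * D) := by
    rw [Matrix.transpose_sub, Matrix.transpose_one, Matrix.transpose_smul, Matrix.transpose_mul,
      hH.eq, hD, Matrix.diagonal_transpose]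
  have hMT : ((1 - η • (D * H)) ^ t)ᵀ = (1 - η • (H * D)) ^ t := by
    rw [Matrix.transpose_pow, hDHT]
  have hMz : ((1 - η • (D * H)) ^ t)ᵀ *ᵥ z = c • z := by
    rw [hMT]
    exact aux_pow_mulVec _ _ _ hNz t
  -- normalize z
  set s : ℝ := ∑ i, z i ^ 2 with hsdef
  have hspos : 0 < s := by
    obtain ⟨i, hi⟩ := hvne
    have hzi : z i ≠ 0 := by
      simp only [hz]
      exact div_ne_zero hi (hsz i)
    have h1 : z i ^ 2 ≤ s := Finset.single_le_sum (fun j _ => sq_nonneg (z j)) (Finset.mem_univ i)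
    have h2 : 0 < z i ^ 2 := by positivity
    linarith
  set u : Fin n → ℝ := (Real.sqrt s)⁻¹ • z with hu'
  have hu : ∑ i, u i ^ 2 = 1 := by
    simp only [hu', Pi.smul_apply, smul_eq_mul, mul_pow, ← Finset.mul_sum]
    rw [← hsdef, ← Real.sqrt_inv, Real.sq_sqrt (by positivity)]
    exact inv_mul_cancel₀ hspos.ne'
  have hMu : ((1 - η • (D * H)) ^ t)ᵀ *ᵥ u = c • u := by
    rw [hu', Matrix.mulVec_smul, hMz, smul_comm]
  -- quadratic form of B * Bᵀ
  have hquad : ∀ x : Fin n → ℝ, dotProduct x ((B * Bᵀ).mulVec x) =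
      ∑ j, ((Bᵀ *ᵥ x) j) ^ 2 := by
    intro x
    rw [← Matrix.mulVec_mulVec, Matrix.dotProduct_mulVec x B, ← Matrix.mulVec_transpose]
    simp [dotProduct, sq]
  set lam : ℝ := lambdaMin (B * Bᵀ) with hlam
  have hlam0 : 0 ≤ lam := by
    rw [hlam, lambdaMin]
    apply le_csInf
    · exact ⟨_, ⟨Pi.single i₀ 1, by simp [Pi.single_apply, ite_pow], rfl⟩⟩
    · rintro cc ⟨x, hx1, rfl⟩
      rw [hquad x]
      positivity
  have hlamle : lam ≤ dotProduct u ((B * Bᵀ).mulVec u) := by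
    rw [hlam, lambdaMin]
    apply csInf_le
    · refine ⟨0, ?_⟩
      rintro cc ⟨x, hx1, rfl⟩
      rw [hquad x]
      positivity
    · exact ⟨u, hu, rfl⟩
  set C : Matrix (Fin n) (Fin m) ℝ := ((1 - η • (D * H)) ^ t) * B with hCdef
  have hCu : Cᵀ *ᵥ u = c • (Bᵀ *ᵥ u) := by
    rw [hCdef, Matrix.transpose_mul, ← Matrix.mulVec_mulVec, hMu, Matrix.mulVec_smul]
  -- Cauchy-Schwarz bound
  have hCS : ∑ j, ((Cᵀ *ᵥ u) j) ^ 2 ≤ ∑ i, ∑ j, C i j ^ 2 := by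
    have hj : ∀ j, ((Cᵀ *ᵥ u) j) ^ 2 ≤ ∑ i, C i j ^ 2 := by
      intro j
      have h := Finset.sum_mul_sq_le_sq_mul_sq Finset.univ (fun i => C i j) u
      calc ((Cᵀ *ᵥ u) j) ^ 2 = (∑ i, C i j * u i) ^ 2 := by
            simp [Matrix.mulVec, dotProduct, Matrix.transpose_apply]
        _ ≤ (∑ i, C i j ^ 2) * ∑ i, u i ^ 2 := h
        _ = ∑ i, C i j ^ 2 := by rw [hu, mul_one]
    calc ∑ j, ((Cᵀ *ᵥ u) j) ^ 2 ≤ ∑ j, ∑ i, C i j ^ 2 :=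
          Finset.sum_le_sum (fun j _ => hj j)
      _ = ∑ i, ∑ j, C i j ^ 2 := Finset.sum_comm
  have hCu2 : ∑ j, ((Cᵀ *ᵥ u) j) ^ 2 = c ^ 2 * ∑ j, ((Bᵀ *ᵥ u) j) ^ 2 := by
    rw [hCu, Finset.mul_sum]
    refine Finset.sum_congr rfl (fun j _ => ?_)
    simp [mul_pow]
  -- powers comparison
  have hb : (0:ℝ) < 1 + η * γ := by positivity
  have hble : 1 + η * γ ≤ 1 - η * μ := by nlinarith
  have hcsq : c ^ 2 = (1 - η * μ) ^ (2 * t) := by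
    rw [hc, ← pow_mul, Nat.mul_comm]
  have hpow : (1 + η * γ) ^ (2 * t) ≤ c ^ 2 := by
    rw [hcsq]
    exact pow_le_pow_left₀ hb.le hble _
  -- Frobenius norm as sum of squares
  have hfrob : frobNorm C ^ 2 = ∑ i, ∑ j, C i j ^ 2 := by
    have hnn : (0:ℝ) ≤ ∑ i, ∑ j, C i j ^ 2 :=
      Finset.sum_nonneg fun i _ => Finset.sum_nonneg fun j _ => sq_nonneg _
    rw [frobNorm, Real.sq_sqrt hnn]
  rw [hfrob]
  calc (1 + η * γ) ^ (2 * t) * lam ≤ c ^ 2 * lam :=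
        mul_le_mul_of_nonneg_right hpow hlam0
    _ ≤ c ^ 2 * (dotProduct u ((B * Bᵀ).mulVec u)) :=
        mul_le_mul_of_nonneg_left hlamle (sq_nonneg c)
    _ = ∑ j, ((Cᵀ *ᵥ u) j) ^ 2 := by rw [hquad u, ← hCu2]
    _ ≤ ∑ i, ∑ j, C i j ^ 2 := hCS
end

section
/- Let (Ω, ℱ, P) be a probability space, T ≥ 1 an integer, X_1, …, X_{T+1} integrable real random variables, A_1, …, A_T measurable events, and g > 0, δ ∈ (0,1), x* ∈ ℝ. Suppose for every t ∈ {1,…,T}: ∫_{A_t} (X_{t+1} − X_t) dP ≤ −g·P(A_t) and ∫_{A_tᶜ} (X_{t+1} − X_t) dP ≤ (δg/2)·P(A_tᶜ), and suppose E[X_{T+1}] ≥ x*. Then (1/T)·Σ_{t=1}^{T} P(A_t) ≤ δ/2 + (E[X_1] − x*)/(T·g); in particular, if T ≥ 2(E[X_1] − x*)/(δ·g), then (1/T)·Σ_{t=1}^{T} (1 − P(A_t)) ≥ 1 − δ. -/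
open scoped BigOperators
open MeasureTheory

theorem stmt14 {Ω : Type*} [MeasurableSpace Ω] (P : Measure Ω) [IsProbabilityMeasure P]
    (T : ℕ) (hT : 1 ≤ T) (X : ℕ → Ω → ℝ)
    (hint : ∀ t ∈ Finset.Icc 1 (T + 1), Integrable (X t) P)
    (A : ℕ → Set Ω) (hA : ∀ t ∈ Finset.Icc 1 T, MeasurableSet (A t))
    (g δ xstar : ℝ) (hg : 0 < g) (hδ0 : 0 < δ) (hδ1 : δ < 1)
    (hdec : ∀ t ∈ Finset.Icc 1 T,
      ∫ ω in A t, (X (t + 1) ω - X t ω) ∂P ≤ -g * (P (A t)).toReal)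
    (hinc : ∀ t ∈ Finset.Icc 1 T,
      ∫ ω in (A t)ᶜ, (X (t + 1) ω - X t ω) ∂P ≤ (δ * g / 2) * (P ((A t)ᶜ)).toReal)
    (hlb : xstar ≤ ∫ ω, X (T + 1) ω ∂P) :
    (1 / T : ℝ) * ∑ t ∈ Finset.Icc 1 T, (P (A t)).toReal
      ≤ δ / 2 + ((∫ ω, X 1 ω ∂P) - xstar) / (T * g) ∧
    (2 * ((∫ ω, X 1 ω ∂P) - xstar) / (δ * g) ≤ (T : ℝ) →
      1 - δ ≤ (1 / T : ℝ) * ∑ t ∈ Finset.Icc 1 T, (1 - (P (A t)).toReal)) := by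
  set p : ℕ → ℝ := fun t => (P (A t)).toReal with hp
  set f : ℕ → ℝ := fun t => ∫ ω, X t ω ∂P with hf
  -- per-step inequality
  have step : ∀ t ∈ Finset.Icc 1 T, f (t + 1) - f t ≤ -g * p t + δ * g / 2 := by
    intro t ht
    simp only [Finset.mem_Icc] at ht
    have h1 : Integrable (X (t + 1)) P := hint _ (by simp [Finset.mem_Icc]; omega)
    have h2 : Integrable (X t) P := hint _ (by simp [Finset.mem_Icc]; omega)
    have hAt : MeasurableSet (A t) := hA t (by simp [Finset.mem_Icc]; omega)
    have hsplit : (∫ ω in A t, (X (t + 1) ω - X t ω) ∂P)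
        + ∫ ω in (A t)ᶜ, (X (t + 1) ω - X t ω) ∂P = ∫ ω, (X (t + 1) ω - X t ω) ∂P :=
      integral_add_compl hAt (h1.sub h2)
    have hsub : (∫ ω, (X (t + 1) ω - X t ω) ∂P) = f (t + 1) - f t := integral_sub h1 h2
    have hc1 : ∫ ω in A t, (X (t + 1) ω - X t ω) ∂P ≤ -g * p t :=
      hdec t (by simp [Finset.mem_Icc]; omega)
    have hc2 : ∫ ω in (A t)ᶜ, (X (t + 1) ω - X t ω) ∂P ≤ δ * g / 2 := by
      refine le_trans (hinc t (by simp [Finset.mem_Icc]; omega)) ?_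
      have h01 : (P ((A t)ᶜ)).toReal ≤ 1 := by
        simpa using ENNReal.toReal_mono (by simp) (prob_le_one (μ := P) (s := (A t)ᶜ))
      have h0 : (0:ℝ) ≤ δ * g / 2 := by positivity
      exact mul_le_of_le_one_right h0 h01
    linarith [hsplit, hsub.symm ▸ hsplit]
  -- telescoping
  have hre : ∀ (h : ℕ → ℝ), ∑ t ∈ Finset.Icc 1 T, h t = ∑ i ∈ Finset.range T, h (i + 1) := by
    intro h
    rw [Finset.range_eq_Ico, show (1:ℕ) = 0 + 1 from rfl]
    rw [show Finset.Icc (0+1) T = Finset.Ico (0+1) (T+1) by rw [Finset.Ico_add_one_right_eq_Icc]]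
    exact (Finset.sum_Ico_eq_sum_range (f := h) (m := 1) (n := T+1)).trans
      (by simp [add_comm])
  have tele : ∑ t ∈ Finset.Icc 1 T, (f (t + 1) - f t) = f (T + 1) - f 1 := by
    rw [hre fun t => f (t + 1) - f t]
    exact Finset.sum_range_sub (fun i => f (i + 1)) T
  have sum_le : f (T + 1) - f 1 ≤ -g * (∑ t ∈ Finset.Icc 1 T, p t) + T * (δ * g / 2) := by
    rw [← tele]
    calc ∑ t ∈ Finset.Icc 1 T, (f (t + 1) - f t)
        ≤ ∑ t ∈ Finset.Icc 1 T, (-g * p t + δ * g / 2) := Finset.sum_le_sum step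
      _ = -g * (∑ t ∈ Finset.Icc 1 T, p t) + T * (δ * g / 2) := by
          rw [Finset.sum_add_distrib, ← Finset.mul_sum, Finset.sum_const, Nat.card_Icc,
            Nat.add_sub_cancel, nsmul_eq_mul]
  set S := ∑ t ∈ Finset.Icc 1 T, p t with hS
  have hT' : (1:ℝ) ≤ T := by exact_mod_cast hT
  have hTpos : (0:ℝ) < T := by linarith
  have hkey : g * S ≤ (f 1 - xstar) + T * (δ * g / 2) := by
    have : xstar ≤ f (T + 1) := hlb
    linarith [sum_le]
  have h1 : (1 / T : ℝ) * S ≤ δ / 2 + (f 1 - xstar) / (T * g) := by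
    have hTg : (0:ℝ) < T * g := mul_pos hTpos hg
    rw [← sub_nonneg]
    have expand : δ / 2 + (f 1 - xstar) / (T * g) - (1 / T : ℝ) * S
        = ((f 1 - xstar) + T * (δ * g / 2) - g * S) / (T * g) := by
      field_simp; ring
    rw [expand]
    exact div_nonneg (by linarith) hTg.le
  constructor
  · exact h1
  · intro hTbig
    have hsum1 : ∑ t ∈ Finset.Icc 1 T, ((1:ℝ) - p t) = T - S := by
      rw [Finset.sum_sub_distrib, Finset.sum_const, Nat.card_Icc]
      simp [hS]
    have hfrac : (f 1 - xstar) / (T * g) ≤ δ / 2 := by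
      rw [div_le_iff₀ (mul_pos hTpos hg)]
      have hδg : (0:ℝ) < δ * g := mul_pos hδ0 hg
      rw [div_le_iff₀ hδg] at hTbig
      nlinarith
    have : (1 / T : ℝ) * S ≤ δ := by linarith
    calc (1:ℝ) - δ ≤ 1 - (1 / T : ℝ) * S := by linarith
      _ = (1 / T : ℝ) * (T - S) := by field_simp
      _ = (1 / T : ℝ) * ∑ t ∈ Finset.Icc 1 T, ((1:ℝ) - p t) := by rw [hsum1]
end
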